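/- Let f ∈ K[x] be nonzero with deg_X(f) ≤ d and let l(X) ∈ K[x][X] with coefficients of degree < n satisfy f = l(Q) (the Q-expansion of f). Let Q' ∈ Ψ_n with ε(Q) < ε(Q'), set h := Q − Q', and let a₀ denote the constant coefficient of the Q'-expansion of f. Then ν_{Q'}(l(h)) ≥ ν_{Q'}(f), and equality holds if and only if ν(a₀) = ν_{Q'}(f) = ν(l(h)). -/

import Mathlib

open Polynomial

noncomputable section

/-- A rank-one valuation on `K[x]`, modeled as a map to `ℝ ∪ {∞}`. -/
structure PolyVal (K : Type*) [Field K] where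
  ν : Polynomial K → WithTop ℝ
  ν_eq_top_iff : ∀ f : Polynomial K, ν f = ⊤ ↔ f = 0
  ν_mul : ∀ f g : Polynomial K, ν (f * g) = ν f + ν g
  ν_add : ∀ f g : Polynomial K, min (ν f) (ν g) ≤ ν (f + g)

namespace PolyVal

variable {K : Type*} [Field K]

/-- The real value of `ν f`, with junk value `0` when `f = 0`. -/
def vr (v : PolyVal K) (f : Polynomial K) : ℝ := WithTop.untopD 0 (v.ν f)

/-- `ε(f) = max{(ν(f) − ν(∂_b f))/b : 1 ≤ b ≤ deg f, ∂_b f ≠ 0}` (for nonconstant `f`). -/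
def eps (v : PolyVal K) (f : Polynomial K) : ℝ :=
  sSup {x : ℝ | ∃ b : ℕ, 1 ≤ b ∧ b ≤ f.natDegree ∧ hasseDeriv b f ≠ 0 ∧
    x = (v.vr f - v.vr (hasseDeriv b f)) / b}

/-- A key polynomial for `ν`: a monic polynomial `Q` such that every (nonconstant)
`f` with `ε(f) ≥ ε(Q)` satisfies `deg f ≥ deg Q`. -/
def IsKeyPol (v : PolyVal K) (Q : Polynomial K) : Prop :=
  Q.Monic ∧ 0 < Q.natDegree ∧
    ∀ f : Polynomial K, 0 < f.natDegree → v.eps Q ≤ v.eps f → Q.natDegree ≤ f.natDegree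

/-- `Ψ_n`: the set of key polynomials for `ν` of degree `n`. -/
def Psi (v : PolyVal K) (n : ℕ) : Set (Polynomial K) :=
  {Q | v.IsKeyPol Q ∧ Q.natDegree = n}

end PolyVal

variable {K : Type*} [Field K]

/-- The `i`-th coefficient of the `Q`-expansion of `f` (for monic `Q`). -/
def qCoeff (Q f : Polynomial K) (i : ℕ) : Polynomial K := (f /ₘ Q ^ i) %ₘ Q

namespace PolyVal

/-- The truncation `ν_Q(f) = min_{0 ≤ i ≤ r} ν(a_i Q^i)` along the `Q`-expansion of `f`. -/
def nuQ (v : PolyVal K) (Q f : Polynomial K) : WithTop ℝ :=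
  (Finset.range (f.natDegree / Q.natDegree + 1)).inf fun i => v.ν (qCoeff Q f i * Q ^ i)

/-- The real value of `ν_Q(f)`, with junk value `0` when `ν_Q(f) = ∞`. -/
def nuQr (v : PolyVal K) (Q f : Polynomial K) : ℝ := WithTop.untopD 0 (v.nuQ Q f)

/-- `f` is `Ψ_n`-stable: `ν_{Q'}(f) = ν(f)` for some `Q' ∈ Ψ_n`. -/
def Stable (v : PolyVal K) (n : ℕ) (f : Polynomial K) : Prop :=
  ∃ Q' ∈ v.Psi n, v.nuQ Q' f = v.ν f

/-- A limit key polynomial for `Ψ_n`: a monic non-stable polynomial of minimal degree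
among non-stable polynomials. -/
def IsLimitKeyPol (v : PolyVal K) (n : ℕ) (F : Polynomial K) : Prop :=
  F.Monic ∧ ¬ v.Stable n F ∧ ∀ g : Polynomial K, ¬ v.Stable n g → F.natDegree ≤ g.natDegree

end PolyVal

section Layer1

namespace PolyVal

variable {K : Type*} [Field K] (v : PolyVal K)

theorem nu0 : v.ν 0 = ⊤ := (v.ν_eq_top_iff 0).2 rfl

theorem nu_ne_top {f : Polynomial K} (hf : f ≠ 0) : v.ν f ≠ ⊤ :=
  fun h => hf ((v.ν_eq_top_iff f).1 h)

theorem exists_real {f : Polynomial K} (hf : f ≠ 0) : ∃ r : ℝ, v.ν f = (r : WithTop ℝ) := by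
  rcases WithTop.ne_top_iff_exists.1 (v.nu_ne_top hf) with ⟨r, hr⟩
  exact ⟨r, hr.symm⟩

theorem nu1 : v.ν 1 = 0 := by
  obtain ⟨r, hr⟩ := v.exists_real (one_ne_zero (α := Polynomial K))
  have h := v.ν_mul 1 1
  rw [mul_one, hr, ← WithTop.coe_add] at h
  have : r = r + r := WithTop.coe_injective h
  have : r = 0 := by linarith
  rw [hr, this, WithTop.coe_zero]

theorem nu_neg (f : Polynomial K) : v.ν (-f) = v.ν f := by
  have hm : ((-1 : Polynomial K)) * (-1) = 1 := by ring
  have h1 : v.ν (-1) = 0 := by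
    obtain ⟨r, hr⟩ := v.exists_real (neg_ne_zero.2 (one_ne_zero (α := Polynomial K)))
    have h := v.ν_mul (-1) (-1)
    rw [hm, v.nu1, hr, ← WithTop.coe_add] at h
    have : (0 : ℝ) = r + r := WithTop.coe_injective h
    have : r = 0 := by linarith
    rw [hr, this, WithTop.coe_zero]
  have : -f = -1 * f := by ring
  rw [this, v.ν_mul, h1, zero_add]

theorem nu_sub_ge (f g : Polynomial K) : min (v.ν f) (v.ν g) ≤ v.ν (f - g) := by
  have := v.ν_add f (-g)
  rwa [v.nu_neg g, ← sub_eq_add_neg] at this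

/-- ultrametric equality -/
theorem nu_add_eq_left {f g : Polynomial K} (h : v.ν f < v.ν g) : v.ν (f + g) = v.ν f := by
  refine le_antisymm ?_ ?_
  · by_contra hc
    push_neg at hc
    have h2 : v.ν f = v.ν (f + g - g) := by ring_nf
    have h3 := v.nu_sub_ge (f + g) g
    rw [← h2] at h3
    rcases min_le_iff.1 h3 with h4 | h4
    · exact absurd h4 (not_le.2 hc)
    · exact absurd h4 (not_le.2 h)
  · exact le_trans (le_min le_rfl h.le) (v.ν_add f g)

theorem nu_sum_ge {ι : Type*} (s : Finset ι) (g : ι → Polynomial K) :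
    s.inf (fun i => v.ν (g i)) ≤ v.ν (∑ i ∈ s, g i) := by
  induction s using Finset.cons_induction with
  | empty => simp [v.nu0]
  | cons a s ha ih =>
    rw [Finset.sum_cons, Finset.inf_cons]
    exact le_trans (min_le_min le_rfl ih) (v.ν_add _ _)

theorem nu_pow (f : Polynomial K) (k : ℕ) : v.ν (f ^ k) = k • v.ν f := by
  induction k with
  | zero => simp [v.nu1]
  | succ k ih => rw [pow_succ, v.ν_mul, ih, succ_nsmul]

theorem nu_natCast_ge (m : ℕ) : (0 : WithTop ℝ) ≤ v.ν (m : Polynomial K) := by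
  induction m with
  | zero => simp [v.nu0]
  | succ m ih =>
    push_cast
    refine le_trans ?_ (v.ν_add m 1)
    rw [v.nu1]
    exact le_min ih le_rfl

end PolyVal

end Layer1
section Layer2

set_option linter.unusedSectionVars false

open Polynomial

variable {K : Type*} [Field K]

theorem deg_lt_of_natDegree_lt {x : Polynomial K} {m : ℕ} (hm : 0 < m)
    (h : x.natDegree < m) : x.degree < (m : WithBot ℕ) := by
  rcases eq_or_ne x 0 with rfl | hx
  · rw [degree_zero]
    exact WithBot.bot_lt_coe m
  · rwa [degree_eq_natDegree hx, Nat.cast_lt]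

variable {P : Polynomial K} (hP : P.Monic) (hn0 : 0 < P.natDegree)

include hP in
theorem div_mod_unique {r1 q1 r2 q2 : Polynomial K}
    (h : r1 + P * q1 = r2 + P * q2)
    (d1 : r1.degree < P.degree) (d2 : r2.degree < P.degree) : r1 = r2 ∧ q1 = q2 := by
  by_cases hq : q1 = q2
  · subst hq
    exact ⟨by linear_combination h, rfl⟩
  · exfalso
    have h2 : P * (q1 - q2) = r2 - r1 := by linear_combination h
    have hd : (r2 - r1).degree < P.degree :=
      lt_of_le_of_lt (degree_sub_le _ _) (max_lt d2 d1)
    rw [← h2, degree_mul] at hd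
    have hq0 : q1 - q2 ≠ 0 := sub_ne_zero.2 hq
    rw [degree_eq_natDegree hq0, degree_eq_natDegree hP.ne_zero, ← Nat.cast_add] at hd
    have hd' : P.natDegree + (q1 - q2).natDegree < P.natDegree := by exact_mod_cast hd
    omega

include hP in
theorem mod_add_mul {r : Polynomial K} (g : Polynomial K) (dr : r.degree < P.degree) :
    (r + P * g) %ₘ P = r ∧ (r + P * g) /ₘ P = g := by
  have h := modByMonic_add_div (r + P * g) P
  exact div_mod_unique hP (by linear_combination h) (degree_modByMonic_lt _ hP) dr

include hP hn0 in
theorem div_pow_succ (x : Polynomial K) (k : ℕ) :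
    x /ₘ P ^ (k + 1) = (x /ₘ P) /ₘ P ^ k := by
  have hPk : (P ^ k).Monic := hP.pow k
  have hPk1 : (P ^ (k + 1)).Monic := hP.pow (k + 1)
  have e1 := modByMonic_add_div x P
  have e2 := modByMonic_add_div (x /ₘ P) (P ^ k)
  have key : (x %ₘ P + P * ((x /ₘ P) %ₘ P ^ k)) + P ^ (k+1) * ((x /ₘ P) /ₘ P ^ k) = x := by
    rw [pow_succ']
    linear_combination e1 + P * e2
  have e3 := modByMonic_add_div x (P ^ (k + 1))
  have hdegpow : ∀ j : ℕ, (P ^ j).degree = ((j * P.natDegree : ℕ) : WithBot ℕ) := by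
    intro j
    rw [degree_eq_natDegree (hP.pow j).ne_zero, hP.natDegree_pow]
  have hdeg : (x %ₘ P + P * ((x /ₘ P) %ₘ P ^ k)).degree < (P ^ (k+1)).degree := by
    have hd1 : (x %ₘ P).degree < P.degree := degree_modByMonic_lt _ hP
    have hd2 : ((x /ₘ P) %ₘ P ^ k).degree < (P ^ k).degree := degree_modByMonic_lt _ hPk
    refine lt_of_le_of_lt (degree_add_le _ _) (max_lt ?_ ?_)
    · rw [hdegpow (k+1)]
      refine lt_of_lt_of_le hd1 ?_
      rw [degree_eq_natDegree hP.ne_zero, Nat.cast_le]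
      exact Nat.le_mul_of_pos_left _ (Nat.succ_pos k)
    · refine lt_of_le_of_lt (degree_mul_le _ _) ?_
      rw [hdegpow (k+1)]
      rw [hdegpow k] at hd2
      rw [degree_eq_natDegree hP.ne_zero]
      calc (P.natDegree : WithBot ℕ) + ((x /ₘ P) %ₘ P ^ k).degree
          < (P.natDegree : WithBot ℕ) + ((k * P.natDegree : ℕ) : WithBot ℕ) :=
            WithBot.add_lt_add_left (by simp) hd2
        _ = (((k+1) * P.natDegree : ℕ) : WithBot ℕ) := by
            rw [← Nat.cast_add]
            congr 1
            ring
  exact (div_mod_unique hPk1 (by linear_combination e3 - key)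
    (degree_modByMonic_lt x hPk1) hdeg).2

include hP in
theorem divByMonic_add' (x y : Polynomial K) :
    (x + y) /ₘ P = x /ₘ P + y /ₘ P := by
  have ex := modByMonic_add_div x P
  have ey := modByMonic_add_div y P
  have exy := modByMonic_add_div (x + y) P
  have hd : (x %ₘ P + y %ₘ P).degree < P.degree :=
    lt_of_le_of_lt (degree_add_le _ _)
      (max_lt (degree_modByMonic_lt _ hP) (degree_modByMonic_lt _ hP))
  exact (div_mod_unique hP (by linear_combination exy - ex - ey)
    (degree_modByMonic_lt (x + y) hP) hd).2

include hP hn0 in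
theorem qCoeff_add (x y : Polynomial K) (k : ℕ) :
    qCoeff P (x + y) k = qCoeff P x k + qCoeff P y k := by
  unfold qCoeff
  induction k generalizing x y with
  | zero =>
    simp only [pow_zero, divByMonic_one]
    exact add_modByMonic x y
  | succ k ih =>
    rw [div_pow_succ hP hn0, div_pow_succ hP hn0, div_pow_succ hP hn0,
      divByMonic_add' hP]
    exact ih _ _

theorem qCoeff_zero_poly (k : ℕ) : qCoeff P 0 k = 0 := by
  unfold qCoeff
  rw [zero_divByMonic, zero_modByMonic]

include hP in
theorem qCoeff_small {x : Polynomial K} (hx : x.degree < P.degree) :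
    qCoeff P x 0 = x ∧ ∀ k, qCoeff P x (k + 1) = 0 := by
  constructor
  · unfold qCoeff
    rw [pow_zero, divByMonic_one, (modByMonic_eq_self_iff hP).2 hx]
  · intro k
    unfold qCoeff
    have : x /ₘ P ^ (k + 1) = 0 := by
      refine (divByMonic_eq_zero_iff (hP.pow (k+1))).2 ?_
      refine lt_of_lt_of_le hx ?_
      rw [degree_eq_natDegree hP.ne_zero, degree_eq_natDegree (hP.pow (k+1)).ne_zero,
        hP.natDegree_pow, Nat.cast_le]
      exact Nat.le_mul_of_pos_left _ (Nat.succ_pos k)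
    rw [this, zero_modByMonic]

include hP hn0 in
theorem qCoeff_mul_P (g : Polynomial K) :
    qCoeff P (P * g) 0 = 0 ∧ ∀ k, qCoeff P (P * g) (k + 1) = qCoeff P g k := by
  have h0 : (0 : Polynomial K).degree < P.degree := by
    rw [degree_eq_natDegree hP.ne_zero]
    exact lt_of_le_of_lt bot_le (WithBot.bot_lt_coe _)
  have hmm := mod_add_mul hP g h0
  rw [zero_add] at hmm
  constructor
  · unfold qCoeff
    rw [pow_zero, divByMonic_one, hmm.1]
  · intro k
    unfold qCoeff
    rw [div_pow_succ hP hn0, hmm.2]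

include hP hn0 in
theorem qCoeff_sum_repr (c : ℕ → Polynomial K) (hc : ∀ i, (c i).degree < P.degree) (N : ℕ) :
    ∀ k, qCoeff P (∑ i ∈ Finset.range N, c i * P ^ i) k = if k < N then c k else 0 := by
  induction N generalizing c with
  | zero =>
    intro k
    simp [qCoeff_zero_poly]
  | succ N ih =>
    intro k
    have hsplit : (∑ i ∈ Finset.range (N+1), c i * P ^ i) =
        c 0 + P * (∑ i ∈ Finset.range N, c (i+1) * P ^ i) := by
      rw [Finset.sum_range_succ' (fun i => c i * P ^ i), Finset.mul_sum, pow_zero, mul_one,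
        add_comm]
      congr 1
      refine Finset.sum_congr rfl fun i _ => ?_
      rw [pow_succ]
      ring
    rw [hsplit]
    cases k with
    | zero =>
      rw [qCoeff_add hP hn0 (c 0) (P * (∑ i ∈ Finset.range N, c (i+1) * P ^ i)) 0,
        (qCoeff_small hP (hc 0)).1, (qCoeff_mul_P hP hn0 _).1, add_zero]
      simp [Nat.succ_pos]
    | succ k =>
      rw [qCoeff_add hP hn0 (c 0) (P * (∑ i ∈ Finset.range N, c (i+1) * P ^ i)) (k+1),
        (qCoeff_small hP (hc 0)).2 k, (qCoeff_mul_P hP hn0 _).2 k, zero_add,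
        ih (fun i => c (i+1)) (fun i => hc (i+1)) k]
      simp [Nat.succ_lt_succ_iff]

include hP hn0 in
theorem expansion (x : Polynomial K) (N : ℕ) (hN : x.natDegree < (N + 1) * P.natDegree) :
    x = ∑ k ∈ Finset.range (N + 1), qCoeff P x k * P ^ k := by
  induction N generalizing x with
  | zero =>
    have hx : x.degree < P.degree := by
      rw [degree_eq_natDegree hP.ne_zero]
      exact deg_lt_of_natDegree_lt hn0 (by simpa using hN)
    simp [(qCoeff_small hP hx).1]
  | succ N ih =>
    have e1 := modByMonic_add_div x P
    have hq0 : qCoeff P x 0 = x %ₘ P := by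
      unfold qCoeff
      rw [pow_zero, divByMonic_one]
    have hqs : ∀ k, qCoeff P x (k+1) = qCoeff P (x /ₘ P) k := by
      intro k
      unfold qCoeff
      rw [div_pow_succ hP hn0]
    have hdiv_deg : (x /ₘ P).natDegree < (N + 1) * P.natDegree := by
      rw [natDegree_divByMonic x hP]
      have h1 : (N + 1 + 1) * P.natDegree = (N + 1) * P.natDegree + P.natDegree := by ring
      have h2 : 0 < (N + 1) * P.natDegree := Nat.mul_pos (Nat.succ_pos N) hn0
      rw [h1] at hN
      omega
    calc x = x %ₘ P + P * (x /ₘ P) := e1.symm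
      _ = ∑ k ∈ Finset.range (N + 2), qCoeff P x k * P ^ k := by
        rw [Finset.sum_range_succ' (fun k => qCoeff P x k * P ^ k), hq0]
        nth_rewrite 1 [ih (x /ₘ P) hdiv_deg]
        rw [Finset.mul_sum, pow_zero, mul_one, add_comm]
        congr 1
        refine Finset.sum_congr rfl fun k _ => ?_
        rw [hqs k, pow_succ]
        ring

end Layer2
section Layer2b

set_option linter.unusedSectionVars false

open Polynomial

namespace PolyVal

variable {K : Type*} [Field K] (v : PolyVal K)
variable {P : Polynomial K} (hP : P.Monic) (hn0 : 0 < P.natDegree)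

include hP hn0 in
theorem nuQ_le_coord (f : Polynomial K) (k : ℕ) :
    v.nuQ P f ≤ v.ν (qCoeff P f k * P ^ k) := by
  rcases le_or_gt k (f.natDegree / P.natDegree) with hk | hk
  · exact Finset.inf_le (Finset.mem_range.2 (Nat.lt_succ_of_le hk))
  · have h1 : f.natDegree < k * P.natDegree := (Nat.div_lt_iff_lt_mul hn0).1 hk
    have hdeg : f.degree < (P ^ k).degree := by
      rw [degree_eq_natDegree (hP.pow k).ne_zero, hP.natDegree_pow]
      exact deg_lt_of_natDegree_lt (lt_of_le_of_lt (Nat.zero_le _) h1) h1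
    have hq : qCoeff P f k = 0 := by
      unfold qCoeff
      rw [(divByMonic_eq_zero_iff (hP.pow k)).2 hdeg, zero_modByMonic]
    rw [hq, zero_mul, v.nu0]
    exact le_top

theorem le_nuQ {c : WithTop ℝ} (f : Polynomial K)
    (h : ∀ k, c ≤ v.ν (qCoeff P f k * P ^ k)) : c ≤ v.nuQ P f :=
  Finset.le_inf fun i _ => h i

theorem div_deg_lt_succ_mul (a b : ℕ) (hb : 0 < b) : a < (a / b + 1) * b := by
  have h1 := Nat.div_add_mod a b
  have h2 : a % b < b := Nat.mod_lt _ hb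
  have h3 : (a / b + 1) * b = b * (a / b) + b := by ring
  omega

include hP hn0 in
theorem nuQ_le_nu (f : Polynomial K) : v.nuQ P f ≤ v.ν f := by
  have hN : f.natDegree < (f.natDegree / P.natDegree + 1) * P.natDegree :=
    div_deg_lt_succ_mul _ _ hn0
  have hexp := expansion hP hn0 f (f.natDegree / P.natDegree) hN
  have := v.nu_sum_ge (Finset.range (f.natDegree / P.natDegree + 1))
    (fun k => qCoeff P f k * P ^ k)
  rw [← hexp] at this
  exact this

include hP hn0 in
theorem nuQ_small {f : Polynomial K} (hf : f.degree < P.degree) : v.nuQ P f = v.ν f := by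
  have h1 : f.natDegree < P.natDegree := by
    rcases eq_or_ne f 0 with rfl | h0
    · simpa using hn0
    · exact natDegree_lt_natDegree h0 hf
  have h2 : f.natDegree / P.natDegree = 0 := Nat.div_eq_of_lt h1
  unfold nuQ
  rw [h2]
  simp [(qCoeff_small hP hf).1]

include hP hn0 in
theorem qCoeff_finsum {ι : Type*} (s : Finset ι) (g : ι → Polynomial K) (k : ℕ) :
    qCoeff P (∑ i ∈ s, g i) k = ∑ i ∈ s, qCoeff P (g i) k := by
  induction s using Finset.cons_induction with
  | empty => simp [qCoeff_zero_poly]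
  | cons a s ha ih =>
    rw [Finset.sum_cons, Finset.sum_cons, qCoeff_add hP hn0, ih]

include hP hn0 in
theorem nuQ_finsum_ge {ι : Type*} (s : Finset ι) (g : ι → Polynomial K) :
    s.inf (fun i => v.nuQ P (g i)) ≤ v.nuQ P (∑ i ∈ s, g i) := by
  refine v.le_nuQ _ fun k => ?_
  rw [qCoeff_finsum hP hn0 s g k, Finset.sum_mul]
  refine le_trans ?_ (v.nu_sum_ge s (fun i => qCoeff P (g i) k * P ^ k))
  exact Finset.inf_mono_fun fun i _ => v.nuQ_le_coord hP hn0 (g i) k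

include hP hn0 in
theorem qCoeff_mul_pow (x : Polynomial K) (j : ℕ) :
    ∀ k, qCoeff P (x * P ^ j) k = if j ≤ k then qCoeff P x (k - j) else 0 := by
  induction j generalizing x with
  | zero =>
    intro k
    simp
  | succ j ih =>
    intro k
    have hx : x * P ^ (j + 1) = P * (x * P ^ j) := by ring
    rw [hx]
    cases k with
    | zero =>
      rw [(qCoeff_mul_P hP hn0 _).1]
      simp
    | succ k =>
      rw [(qCoeff_mul_P hP hn0 _).2 k, ih x k]
      by_cases hjk : j ≤ k
      · simp [hjk, Nat.succ_le_succ hjk, Nat.succ_sub_succ]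
      · simp [hjk, fun h => hjk (Nat.le_of_succ_le_succ h)]

include hP hn0 in
theorem coord_mul_pow (x : Polynomial K) (j k : ℕ) (hjk : j ≤ k) :
    v.ν (qCoeff P (x * P ^ j) k * P ^ k) =
      v.ν (qCoeff P x (k - j) * P ^ (k - j)) + j • v.ν P := by
  rw [qCoeff_mul_pow hP hn0 x j k, if_pos hjk]
  rw [v.ν_mul, v.ν_mul, v.nu_pow, v.nu_pow]
  have : k • v.ν P = (k - j) • v.ν P + j • v.ν P := by
    rw [← add_nsmul]
    congr 1
    omega
  rw [this, add_assoc]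

end PolyVal

end Layer2b
section Layer3

set_option linter.unusedSectionVars false

open Polynomial

namespace PolyVal

variable {K : Type*} [Field K] (v : PolyVal K)

theorem vr_coe {f : Polynomial K} (hf : f ≠ 0) : v.ν f = ((v.vr f : ℝ) : WithTop ℝ) := by
  obtain ⟨r, hr⟩ := v.exists_real hf
  rw [hr]
  unfold vr
  rw [hr]
  rfl

theorem vr_one : v.vr (1 : Polynomial K) = 0 := by
  unfold vr
  rw [v.nu1]
  rfl

theorem eps_set_finite (f : Polynomial K) :
    Set.Finite {x : ℝ | ∃ b : ℕ, 1 ≤ b ∧ b ≤ f.natDegree ∧ hasseDeriv b f ≠ 0 ∧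
      x = (v.vr f - v.vr (hasseDeriv b f)) / b} := by
  refine Set.Finite.subset (Finset.finite_toSet ((Finset.Icc 1 f.natDegree).image
    (fun b => (v.vr f - v.vr (hasseDeriv b f)) / b))) ?_
  rintro x ⟨b, h1, h2, _h3, h4⟩
  simp only [Finset.coe_image, Set.mem_image, Finset.mem_coe, Finset.mem_Icc]
  exact ⟨b, ⟨h1, h2⟩, h4.symm⟩

theorem eps_set_nonempty {f : Polynomial K} (hf : f.natDegree ≠ 0) :
    Set.Nonempty {x : ℝ | ∃ b : ℕ, 1 ≤ b ∧ b ≤ f.natDegree ∧ hasseDeriv b f ≠ 0 ∧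
      x = (v.vr f - v.vr (hasseDeriv b f)) / b} := by
  have hf0 : f ≠ 0 := fun h0 => hf (by simp [h0])
  have hne : hasseDeriv f.natDegree f ≠ 0 := by
    intro h
    have hc := congrArg (fun p => Polynomial.coeff p 0) h
    simp only [hasseDeriv_coeff, coeff_zero, zero_add, Nat.choose_self] at hc
    have hcc : f.coeff f.natDegree = 0 := by simpa using hc
    exact (Polynomial.leadingCoeff_ne_zero.2 hf0) hcc
  exact ⟨_, f.natDegree, Nat.one_le_iff_ne_zero.2 hf, le_rfl, hne, rfl⟩

theorem eps_ge {f : Polynomial K} (hf : f.natDegree ≠ 0) {b : ℕ} (hb1 : 1 ≤ b)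
    (hb2 : b ≤ f.natDegree) (hd : hasseDeriv b f ≠ 0) :
    (v.vr f - v.vr (hasseDeriv b f)) / b ≤ v.eps f :=
  le_csSup (v.eps_set_finite f).bddAbove ⟨b, hb1, hb2, hd, rfl⟩

theorem eps_argmax {f : Polynomial K} (hf : f.natDegree ≠ 0) :
    ∃ b : ℕ, 1 ≤ b ∧ b ≤ f.natDegree ∧ hasseDeriv b f ≠ 0 ∧
      v.eps f = (v.vr f - v.vr (hasseDeriv b f)) / b := by
  have hmem := (v.eps_set_nonempty hf).csSup_mem (v.eps_set_finite f)
  obtain ⟨b, h1, h2, h3, h4⟩ := hmem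
  exact ⟨b, h1, h2, h3, h4⟩

/-- helper for WithTop arithmetic -/
theorem coe_sub_le {x : WithTop ℝ} {r c : ℝ} (h : (r : WithTop ℝ) ≤ x + (c : WithTop ℝ)) :
    ((r - c : ℝ) : WithTop ℝ) ≤ x := by
  cases x with
  | top => exact le_top
  | coe t =>
    rw [← WithTop.coe_add, WithTop.coe_le_coe] at h
    rw [WithTop.coe_le_coe]
    linarith

theorem le_add_coe {x : WithTop ℝ} {r c : ℝ} (h : ((r - c : ℝ) : WithTop ℝ) ≤ x) :
    (r : WithTop ℝ) ≤ x + (c : WithTop ℝ) := by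
  cases x with
  | top => simp
  | coe t =>
    rw [WithTop.coe_le_coe] at h
    rw [← WithTop.coe_add, WithTop.coe_le_coe]
    linarith

/-- The fundamental derivative bound: `ν f ≤ ν (∂_b f) + b·E` whenever `eps f ≤ E`
(when `f` is nonconstant; degenerate cases hold trivially). -/
theorem deriv_ge (f : Polynomial K) {E : ℝ} (hE : f ≠ 0 → f.natDegree ≠ 0 → v.eps f ≤ E)
    (b : ℕ) : v.ν f ≤ v.ν (hasseDeriv b f) + (((b : ℝ) * E : ℝ) : WithTop ℝ) := by
  rcases Nat.eq_zero_or_pos b with rfl | hb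
  · simp [hasseDeriv_zero']
  rcases eq_or_ne (hasseDeriv b f) 0 with hd | hd
  · rw [hd, v.nu0]
    simp
  have hf0 : f ≠ 0 := by
    intro h
    exact hd (by simp [h])
  have hbdeg : b ≤ f.natDegree := by
    by_contra hc
    exact hd (f.hasseDeriv_eq_zero_of_lt_natDegree b (not_le.1 hc))
  have hfc : f.natDegree ≠ 0 := by omega
  have h1 : (v.vr f - v.vr (hasseDeriv b f)) / b ≤ E := le_trans (v.eps_ge hfc hb hbdeg hd) (hE hf0 hfc)
  have hbpos : (0 : ℝ) < b := by exact_mod_cast hb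
  have h2 : v.vr f ≤ v.vr (hasseDeriv b f) + b * E := by
    rw [div_le_iff₀ hbpos] at h1
    linarith
  rw [v.vr_coe hf0, v.vr_coe hd, ← WithTop.coe_add, WithTop.coe_le_coe]
  linarith

/-- product derivative bound -/
theorem deriv_mul_ge (a b : Polynomial K) {E : ℝ}
    (hEa : a ≠ 0 → a.natDegree ≠ 0 → v.eps a ≤ E)
    (hEb : b ≠ 0 → b.natDegree ≠ 0 → v.eps b ≤ E) (k : ℕ) :
    v.ν (a * b) ≤ v.ν (hasseDeriv k (a * b)) + (((k : ℝ) * E : ℝ) : WithTop ℝ) := by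
  rw [hasseDeriv_mul]
  have hne : (Finset.HasAntidiagonal.antidiagonal k).Nonempty := ⟨(0, k), by simp⟩
  obtain ⟨ij, hmem, hij⟩ := Finset.exists_mem_eq_inf (Finset.HasAntidiagonal.antidiagonal k) hne
    (fun ij => v.ν (hasseDeriv ij.1 a * hasseDeriv ij.2 b))
  have hsum := v.nu_sum_ge (Finset.HasAntidiagonal.antidiagonal k)
    (fun ij => hasseDeriv ij.1 a * hasseDeriv ij.2 b)
  rw [hij] at hsum
  refine le_trans ?_ (add_le_add_left hsum _)
  have hk : ij.1 + ij.2 = k := Finset.HasAntidiagonal.mem_antidiagonal.1 hmem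
  have h1 := v.deriv_ge a hEa ij.1
  have h2 := v.deriv_ge b hEb ij.2
  calc v.ν (a * b) = v.ν a + v.ν b := v.ν_mul a b
    _ ≤ (v.ν (hasseDeriv ij.1 a) + ((ij.1 : ℝ) * E : ℝ)) +
        (v.ν (hasseDeriv ij.2 b) + ((ij.2 : ℝ) * E : ℝ)) := add_le_add h1 h2
    _ = v.ν (hasseDeriv ij.1 a * hasseDeriv ij.2 b) + (((k : ℝ) * E : ℝ) : WithTop ℝ) := by
        rw [v.ν_mul]
        rw [add_assoc, add_comm (((ij.1 : ℝ) * E : ℝ) : WithTop ℝ), add_assoc, ← WithTop.coe_add,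
          ← add_assoc]
        congr 2
        rw [← hk]
        push_cast
        ring

/-- the top Hasse derivative of a monic polynomial is 1 -/
theorem hasseDeriv_monic_top {P : Polynomial K} (hP : P.Monic) :
    hasseDeriv P.natDegree P = 1 := by
  ext m
  rw [hasseDeriv_coeff]
  rcases Nat.eq_zero_or_pos m with rfl | hm
  · simp only [zero_add, Nat.choose_self, one_smul]
    have : P.coeff P.natDegree = 1 := hP.coeff_natDegree
    simp [this]
  · have h1 : P.natDegree < m + P.natDegree := by omega
    rw [P.coeff_eq_zero_of_natDegree_lt h1, mul_zero, Polynomial.coeff_one,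
      if_neg (by omega)]

/-- `vr P ≤ n * eps P` for monic nonconstant `P` -/
theorem vr_le_deg_mul_eps {P : Polynomial K} (hP : P.Monic) (hn0 : 0 < P.natDegree) :
    v.vr P ≤ (P.natDegree : ℝ) * v.eps P := by
  have hd : hasseDeriv P.natDegree P ≠ 0 := by
    rw [hasseDeriv_monic_top hP]
    exact one_ne_zero
  have h := v.eps_ge (Nat.pos_iff_ne_zero.1 hn0) hn0 le_rfl hd
  rw [hasseDeriv_monic_top hP, v.vr_one] at h
  have hbpos : (0 : ℝ) < P.natDegree := by exact_mod_cast hn0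
  rw [div_le_iff₀ hbpos] at h
  linarith

/-- key polynomials dominate the eps of smaller-degree polynomials -/
theorem eps_lt_key {P g : Polynomial K} (hKP : v.IsKeyPol P)
    (hg : g.natDegree ≠ 0) (hdeg : g.natDegree < P.natDegree) : v.eps g < v.eps P := by
  by_contra hc
  push_neg at hc
  exact absurd (hKP.2.2 g (Nat.pos_of_ne_zero hg) hc) (by omega)

end PolyVal

end Layer3
section Layer4

set_option linter.unusedSectionVars false

open Polynomial

namespace PolyVal

variable {K : Type*} [Field K] (v : PolyVal K)
variable {P : Polynomial K} (hP : P.Monic) (hn0 : 0 < P.natDegree)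
variable {E : ℝ}

include hP hn0 in
/-- Fundamental carry lemma: dividing a product of two sub-degree polynomials by a
key-like polynomial `P` (one whose `eps` strictly dominates the `eps` of all smaller-degree
polynomials, bounded by `E`), the remainder carries the exact value and the carried part
gains at least `eps P - E`. -/
theorem carry
    (hE : ∀ g : Polynomial K, g ≠ 0 → g.natDegree ≠ 0 → g.natDegree < P.natDegree → v.eps g ≤ E)
    (hEP : E < v.eps P)
    {a b : Polynomial K} (ha : a ≠ 0) (hb : b ≠ 0)
    (hda : a.natDegree < P.natDegree) (hdb : b.natDegree < P.natDegree) :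
    v.ν ((a * b) %ₘ P) = v.ν (a * b) ∧
      v.ν (a * b) + ((v.eps P - E : ℝ) : WithTop ℝ) ≤ v.ν (((a * b) /ₘ P) * P) := by
  set u := (a * b) %ₘ P with hu
  set s := (a * b) /ₘ P with hs
  have hdef : u + P * s = a * b := modByMonic_add_div (a * b) P
  have hab0 : a * b ≠ 0 := mul_ne_zero ha hb
  by_cases hs0 : s = 0
  · rw [hs0, mul_zero, add_zero] at hdef
    constructor
    · rw [hdef]
    · rw [hs0, zero_mul, v.nu0]
      exact le_top
  -- main case
  have hP0 : P ≠ 0 := hP.ne_zero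
  have hPn : P.natDegree ≠ 0 := Nat.pos_iff_ne_zero.1 hn0
  set rab := v.vr (a * b) with hrab
  set rs := v.vr s with hrs
  set rP := v.vr P with hrP
  have hab_coe : v.ν (a * b) = (rab : WithTop ℝ) := v.vr_coe hab0
  have hs_coe : v.ν s = (rs : WithTop ℝ) := v.vr_coe hs0
  have hP_coe : v.ν P = (rP : WithTop ℝ) := v.vr_coe hP0
  set σ := v.eps P - E with hσ
  have hσpos : 0 < σ := by simp [hσ]; linarith
  -- degree bound for s
  have hsdeg : s.natDegree < P.natDegree := by
    have h1 : (a * b).natDegree = a.natDegree + b.natDegree := natDegree_mul ha hb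
    have h2 : s.natDegree = (a * b).natDegree - P.natDegree := natDegree_divByMonic (a * b) hP
    omega
  have hEs : s ≠ 0 → s.natDegree ≠ 0 → v.eps s ≤ E := fun h1 h2 => hE s h1 h2 hsdeg
  have hEu : u ≠ 0 → u.natDegree ≠ 0 → v.eps u ≤ E := by
    intro h1 h2
    refine hE u h1 h2 ?_
    exact natDegree_lt_natDegree h1 (degree_modByMonic_lt (a * b) hP)
  -- argmax derivative of P
  obtain ⟨k, hk1, hkn, hdk, hmax⟩ := v.eps_argmax hPn
  have hkpos : (0 : ℝ) < k := by exact_mod_cast hk1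
  have hder : v.ν (hasseDeriv k P) = ((rP - k * v.eps P : ℝ) : WithTop ℝ) := by
    rw [v.vr_coe hdk, WithTop.coe_eq_coe]
    have : v.eps P * k = rP - v.vr (hasseDeriv k P) := by
      rw [hmax]
      field_simp
      rfl
    linarith
  -- split the k-th derivative of P * s
  set T := (Finset.HasAntidiagonal.antidiagonal k).filter (fun ij => ij.2 ≠ 0) with hT
  have hsplit : hasseDeriv k (P * s) = hasseDeriv k P * s +
      ∑ ij ∈ T, hasseDeriv ij.1 P * hasseDeriv ij.2 s := by
    rw [hasseDeriv_mul]
    rw [← Finset.sum_filter_add_sum_filter_not (Finset.HasAntidiagonal.antidiagonal k) (fun ij => ij.2 = 0)]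
    congr 1
    · have hone : (Finset.HasAntidiagonal.antidiagonal k).filter (fun ij : ℕ × ℕ => ij.2 = 0) = {(k, 0)} := by
        ext ij
        simp only [Finset.mem_filter, Finset.HasAntidiagonal.mem_antidiagonal, Finset.mem_singleton,
          Prod.ext_iff]
        constructor
        · rintro ⟨h1, h2⟩
          exact ⟨by omega, h2⟩
        · rintro ⟨h1, h2⟩
          constructor <;> omega
      rw [hone, Finset.sum_singleton, hasseDeriv_zero']
  have heq : hasseDeriv k (a * b) = hasseDeriv k u + hasseDeriv k (P * s) := by
    rw [← hdef]
    exact map_add _ _ _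
  have hiso : s * hasseDeriv k P = hasseDeriv k (a * b) - hasseDeriv k u -
      ∑ ij ∈ T, hasseDeriv ij.1 P * hasseDeriv ij.2 s := by
    rw [heq, hsplit]
    ring
  -- value of the isolated term
  have hlhs : v.ν (s * hasseDeriv k P) = ((rs + rP - (k : ℝ) * v.eps P : ℝ) : WithTop ℝ) := by
    rw [v.ν_mul, hs_coe, hder, ← WithTop.coe_add, WithTop.coe_eq_coe]
    ring
  -- bound for the T sum
  have hTsum : ((rs + rP - k * v.eps P + σ : ℝ) : WithTop ℝ) ≤
      v.ν (∑ ij ∈ T, hasseDeriv ij.1 P * hasseDeriv ij.2 s) := by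
    refine le_trans (Finset.le_inf fun ij hij => ?_) (v.nu_sum_ge T _)
    have hmem := Finset.mem_filter.1 hij
    have hk' : ij.1 + ij.2 = k := Finset.HasAntidiagonal.mem_antidiagonal.1 hmem.1
    have hj1 : 1 ≤ ij.2 := Nat.pos_of_ne_zero hmem.2
    have t1 : ((rP - ij.1 * v.eps P : ℝ) : WithTop ℝ) ≤ v.ν (hasseDeriv ij.1 P) := by
      refine coe_sub_le ?_
      rw [← hP_coe]
      exact v.deriv_ge P (fun _ _ => le_rfl) ij.1
    have t2 : ((rs - ij.2 * E : ℝ) : WithTop ℝ) ≤ v.ν (hasseDeriv ij.2 s) := by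
      refine coe_sub_le ?_
      rw [← hs_coe]
      exact v.deriv_ge s hEs ij.2
    rw [v.ν_mul]
    refine le_trans ?_ (add_le_add t1 t2)
    rw [← WithTop.coe_add, WithTop.coe_le_coe]
    have hcast : (ij.1 : ℝ) + ij.2 = k := by exact_mod_cast hk'
    have hj1' : (1 : ℝ) ≤ ij.2 := by exact_mod_cast hj1
    have hfact : ((ij.2 : ℝ) - 1) * (v.eps P - E) ≥ 0 := by
      apply mul_nonneg <;> linarith
    have hcast2 : (ij.1 : ℝ) * v.eps P + (ij.2 : ℝ) * v.eps P = (k : ℝ) * v.eps P := by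
      rw [← add_mul, hcast]
    rw [hσ]
    nlinarith [hfact, hcast2]
  -- min bound from the isolated equation
  have hu_bd : v.ν u ≤ v.ν (hasseDeriv k u) + (((k : ℝ) * E : ℝ) : WithTop ℝ) :=
    v.deriv_ge u hEu k
  have hab_bd : v.ν (a * b) ≤ v.ν (hasseDeriv k (a * b)) + (((k : ℝ) * E : ℝ) : WithTop ℝ) :=
    v.deriv_mul_ge a b (fun _ h => hE a ha h hda) (fun _ h => hE b hb h hdb) k
  have h2all : min (v.ν (hasseDeriv k (a * b) - hasseDeriv k u))
      (v.ν (∑ ij ∈ T, hasseDeriv ij.1 P * hasseDeriv ij.2 s)) ≤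
      ((rs + rP - (k : ℝ) * v.eps P : ℝ) : WithTop ℝ) := by
    rw [← hlhs, hiso]
    exact v.nu_sub_ge _ _
  have hcase : min (v.ν (hasseDeriv k (a * b))) (v.ν (hasseDeriv k u)) ≤
      ((rs + rP - (k : ℝ) * v.eps P : ℝ) : WithTop ℝ) := by
    rcases min_le_iff.1 h2all with h | h
    · exact le_trans (v.nu_sub_ge (hasseDeriv k (a * b)) (hasseDeriv k u)) h
    · exfalso
      have hle := le_trans hTsum h
      rw [WithTop.coe_le_coe] at hle
      linarith
  -- translate to bounds on ν(ab), ν(u)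
  have hkey : v.ν (a * b) ≤ ((rs + rP - σ : ℝ) : WithTop ℝ) ∨
      v.ν u ≤ ((rs + rP - σ : ℝ) : WithTop ℝ) := by
    have hkE : (k : ℝ) * E + (rs + rP - (k : ℝ) * v.eps P) ≤ rs + rP - σ := by
      have hk1' : (1 : ℝ) ≤ k := by exact_mod_cast hk1
      rw [hσ]
      nlinarith [(by linarith : (0:ℝ) ≤ (k - 1)), (by linarith : (0:ℝ) < v.eps P - E)]
    rcases min_le_iff.1 hcase with h | h
    · left
      refine le_trans hab_bd ?_
      calc v.ν (hasseDeriv k (a * b)) + (((k : ℝ) * E : ℝ) : WithTop ℝ)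
          ≤ ((rs + rP - (k : ℝ) * v.eps P : ℝ) : WithTop ℝ) + (((k : ℝ) * E : ℝ) : WithTop ℝ) :=
            add_le_add_left h _
        _ ≤ _ := by
            rw [← WithTop.coe_add, WithTop.coe_le_coe]
            linarith
    · right
      refine le_trans hu_bd ?_
      calc v.ν (hasseDeriv k u) + (((k : ℝ) * E : ℝ) : WithTop ℝ)
          ≤ ((rs + rP - (k : ℝ) * v.eps P : ℝ) : WithTop ℝ) + (((k : ℝ) * E : ℝ) : WithTop ℝ) :=
            add_le_add_left h _
        _ ≤ _ := by
            rw [← WithTop.coe_add, WithTop.coe_le_coe]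
            linarith
  have hPs : v.ν (P * s) = ((rs + rP : ℝ) : WithTop ℝ) := by
    rw [v.ν_mul, hP_coe, hs_coe, ← WithTop.coe_add, WithTop.coe_eq_coe]
    ring
  -- conclude: case 1 must hold
  have hmain : v.ν (a * b) ≤ ((rs + rP - σ : ℝ) : WithTop ℝ) := by
    rcases hkey with h | h
    · exact h
    · -- case 2: ν u ≤ rs + rP - σ < ν(Ps); then u = ab - Ps forces ν u ≥ min(ν ab, ν Ps)
      by_contra hc
      push_neg at hc
      have hu_lt_ab : v.ν u < v.ν (a * b) := lt_of_le_of_lt h hc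
      have hu_lt_Ps : v.ν u < v.ν (P * s) := by
        rw [hPs]
        refine lt_of_le_of_lt h (WithTop.coe_lt_coe.2 (by linarith))
      have hu_ge : min (v.ν (a * b)) (v.ν (P * s)) ≤ v.ν u := by
        have : u = a * b - P * s := by rw [← hdef]; ring
        rw [this]
        exact v.nu_sub_ge (a * b) (P * s)
      rcases min_le_iff.1 hu_ge with h' | h'
      · exact absurd h' (not_le.2 hu_lt_ab)
      · exact absurd h' (not_le.2 hu_lt_Ps)
  -- conclusion 2
  have hconc2 : v.ν (a * b) + ((σ : ℝ) : WithTop ℝ) ≤ v.ν (s * P) := by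
    rw [hab_coe, ← WithTop.coe_add, mul_comm s P, hPs, WithTop.coe_le_coe]
    rw [hab_coe, WithTop.coe_le_coe] at hmain
    linarith
  -- conclusion 1
  have hconc1 : v.ν u = v.ν (a * b) := by
    have hab_lt_Ps : v.ν (a * b) < v.ν (P * s) := by
      rw [hab_coe, hPs, WithTop.coe_lt_coe]
      rw [hab_coe, WithTop.coe_le_coe] at hmain
      linarith
    have h1 : min (v.ν u) (v.ν (P * s)) ≤ v.ν (a * b) := by
      conv_rhs => rw [← hdef]
      exact v.ν_add u (P * s)
    have h2 : min (v.ν (a * b)) (v.ν (P * s)) ≤ v.ν u := by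
      have : u = a * b - P * s := by rw [← hdef]; ring
      rw [this]
      exact v.nu_sub_ge (a * b) (P * s)
    have hge : v.ν (a * b) ≤ v.ν u := by
      rw [min_eq_left hab_lt_Ps.le] at h2
      exact h2
    have hle : v.ν u ≤ v.ν (a * b) := by
      rcases min_le_iff.1 h1 with h' | h'
      · exact h'
      · exact absurd h' (not_le.2 hab_lt_Ps)
    exact le_antisymm hle hge
  exact ⟨hconc1, hconc2⟩

end PolyVal

end Layer4
section Layer5

set_option linter.unusedSectionVars false

open Polynomial

namespace PolyVal

variable {K : Type*} [Field K] (v : PolyVal K)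
variable {P : Polynomial K} (hP : P.Monic) (hn0 : 0 < P.natDegree)
variable {E : ℝ}

/-- sharp stability with slack `σ`: all coordinates of the `P`-expansion are at least
`ν g`, and all positive coordinates gain `σ`. -/
def SS (v : PolyVal K) (P : Polynomial K) (σ : ℝ) (g : Polynomial K) : Prop :=
  g ≠ 0 ∧ (∀ k, v.ν g ≤ v.ν (qCoeff P g k * P ^ k)) ∧
    (∀ k, 1 ≤ k → v.ν g + ((σ : ℝ) : WithTop ℝ) ≤ v.ν (qCoeff P g k * P ^ k))

include hP hn0 in
theorem SS_base {g : Polynomial K} (hg : g ≠ 0) (hdg : g.natDegree < P.natDegree) (σ : ℝ) :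
    v.SS P σ g := by
  have hdg' : g.degree < P.degree := by
    rw [degree_eq_natDegree hP.ne_zero]
    exact deg_lt_of_natDegree_lt hn0 hdg
  refine ⟨hg, fun k => ?_, fun k hk => ?_⟩
  · cases k with
    | zero => rw [(qCoeff_small hP hdg').1, pow_zero, mul_one]
    | succ k => rw [(qCoeff_small hP hdg').2 k, zero_mul, v.nu0]; exact le_top
  · cases k with
    | zero => omega
    | succ k => rw [(qCoeff_small hP hdg').2 k, zero_mul, v.nu0]; exact le_top

include hP hn0 in
theorem SS_mul_small
    (hE : ∀ g : Polynomial K, g ≠ 0 → g.natDegree ≠ 0 → g.natDegree < P.natDegree → v.eps g ≤ E)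
    (hEP : E < v.eps P)
    {g c : Polynomial K} (hg : v.SS P (v.eps P - E) g) (hc : c ≠ 0)
    (hdc : c.natDegree < P.natDegree) : v.SS P (v.eps P - E) (g * c) := by
  obtain ⟨hg0, hco, hcoσ⟩ := hg
  have hgc0 : g * c ≠ 0 := mul_ne_zero hg0 hc
  set N := g.natDegree / P.natDegree with hN
  have hNdeg : g.natDegree < (N + 1) * P.natDegree := div_deg_lt_succ_mul _ _ hn0
  have hexp := expansion hP hn0 g N hNdeg
  have hgc_exp : g * c = ∑ k ∈ Finset.range (N + 1), (qCoeff P g k * c) * P ^ k := by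
    conv_lhs => rw [hexp]
    rw [Finset.sum_mul]
    refine Finset.sum_congr rfl fun k _ => ?_
    ring
  -- coordinate bound for one piece
  have hpiece : ∀ k t : ℕ, (v.ν (g * c) ≤
      v.ν (qCoeff P ((qCoeff P g k * c) * P ^ k) t * P ^ t)) ∧
      (1 ≤ t → v.ν (g * c) + ((v.eps P - E : ℝ) : WithTop ℝ) ≤
        v.ν (qCoeff P ((qCoeff P g k * c) * P ^ k) t * P ^ t)) := by
    intro k t
    set a := qCoeff P g k with ha
    by_cases ha0 : a = 0
    · rw [ha0, zero_mul, zero_mul, qCoeff_zero_poly, zero_mul, v.nu0]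
      exact ⟨le_top, fun _ => le_top⟩
    have hdeg_a : a.natDegree < P.natDegree := by
      have := degree_modByMonic_lt (g /ₘ P ^ k) hP
      exact natDegree_lt_natDegree ha0 this
    -- carry decomposition of a * c
    have hcarry := v.carry hP hn0 hE hEP ha0 hc hdeg_a hdc
    set u := (a * c) %ₘ P with hu
    set s := (a * c) /ₘ P with hs
    rcases lt_or_ge t k with htk | htk
    · -- coordinate below k : zero
      have : qCoeff P (a * c * P ^ k) t = 0 := by
        rw [qCoeff_mul_pow hP hn0 _ k t, if_neg (by omega)]
      rw [this, zero_mul, v.nu0]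
      exact ⟨le_top, fun _ => le_top⟩
    · have hcoord := coord_mul_pow v hP hn0 (a * c) k t htk
      set m := t - k with hm
      have hsplit : v.ν (qCoeff P (a * c * P ^ k) t * P ^ t) =
          v.ν (qCoeff P (a * c) m * P ^ m) + k • v.ν P := hcoord
      have hgc_val : v.ν (g * c) = v.ν g + v.ν c := v.ν_mul g c
      have hak_val : v.ν (qCoeff P g k * P ^ k) = v.ν a + k • v.ν P := by
        rw [← ha, v.ν_mul, v.nu_pow]
      have hac_val : v.ν (a * c) = v.ν a + v.ν c := v.ν_mul a c
      have hσnn : (0 : WithTop ℝ) ≤ ((v.eps P - E : ℝ) : WithTop ℝ) := by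
        have : (0:ℝ) ≤ v.eps P - E := sub_nonneg.2 hEP.le
        exact_mod_cast this
      rcases Nat.lt_or_ge m 2 with hm2 | hm2
      · interval_cases m
        · -- m = 0 : remainder coordinate
          have hq0 : qCoeff P (a * c) 0 = u := by
            unfold qCoeff
            rw [pow_zero, divByMonic_one, hu]
          rw [hsplit, hq0, pow_zero, mul_one, hcarry.1, hac_val, hgc_val]
          have hkt : k = t := by omega
          have hre : v.ν a + v.ν c + k • v.ν P = (v.ν a + k • v.ν P) + v.ν c := by
            abel
          constructor
          · rw [hre]
            refine add_le_add_left ?_ _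
            rw [← hak_val]
            exact hco k
          · intro ht1
            rw [hre]
            have h1 := hcoσ k (by omega)
            rw [hak_val] at h1
            calc v.ν g + v.ν c + ((v.eps P - E : ℝ) : WithTop ℝ)
                = (v.ν g + ((v.eps P - E : ℝ) : WithTop ℝ)) + v.ν c := by abel
              _ ≤ (v.ν a + k • v.ν P) + v.ν c := add_le_add_left h1 _
        · -- m = 1 : carried coordinate
          have hq1 : qCoeff P (a * c) 1 = s := by
            unfold qCoeff
            rw [pow_one, ← hs]
            rcases eq_or_ne s 0 with h0 | h0
            · rw [h0, zero_modByMonic]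
            · refine (modByMonic_eq_self_iff hP).2 ?_
              have h1 : (a * c).natDegree = a.natDegree + c.natDegree :=
                natDegree_mul ha0 hc
              have h2 : s.natDegree = (a * c).natDegree - P.natDegree :=
                natDegree_divByMonic (a * c) hP
              rw [degree_eq_natDegree hP.ne_zero]
              exact deg_lt_of_natDegree_lt hn0 (by omega)
          rw [hsplit, hq1, pow_one, hgc_val]
          have hstep : (v.ν g + v.ν c) + ((v.eps P - E : ℝ) : WithTop ℝ) ≤
              v.ν (s * P) + k • v.ν P := by
            have h1 : v.ν g ≤ v.ν a + k • v.ν P := by rw [← hak_val]; exact hco k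
            have h2 := hcarry.2
            calc v.ν g + v.ν c + ((v.eps P - E : ℝ) : WithTop ℝ)
                ≤ ((v.ν a + k • v.ν P) + v.ν c) + ((v.eps P - E : ℝ) : WithTop ℝ) :=
                  add_le_add_left (add_le_add_left h1 _) _
              _ = (v.ν (a * c) + ((v.eps P - E : ℝ) : WithTop ℝ)) + k • v.ν P := by
                  rw [hac_val]
                  abel
              _ ≤ v.ν (s * P) + k • v.ν P := add_le_add_left h2 _
          constructor
          · exact le_trans (le_add_of_nonneg_right hσnn) hstep
          · exact fun _ => hstep
      · -- m ≥ 2 : zero coordinate since deg (a*c) < 2 deg P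
        have hzero : qCoeff P (a * c) m = 0 := by
          unfold qCoeff
          have hdeg_ac : (a * c).degree < (P ^ m).degree := by
            have h1 : (a * c).natDegree = a.natDegree + c.natDegree := natDegree_mul ha0 hc
            rw [degree_eq_natDegree (hP.pow m).ne_zero, hP.natDegree_pow]
            refine deg_lt_of_natDegree_lt (by positivity) ?_
            have : 2 * P.natDegree ≤ m * P.natDegree := Nat.mul_le_mul_right _ hm2
            omega
          rw [(divByMonic_eq_zero_iff (hP.pow m)).2 hdeg_ac, zero_modByMonic]
        rw [hsplit, hzero, zero_mul, v.nu0]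
        constructor
        · simp
        · intro
          simp
  -- assemble
  have hcoord_sum : ∀ t, qCoeff P (g * c) t =
      ∑ k ∈ Finset.range (N + 1), qCoeff P ((qCoeff P g k * c) * P ^ k) t := by
    intro t
    conv_lhs => rw [hgc_exp]
    exact qCoeff_finsum hP hn0 _ _ t
  refine ⟨hgc0, fun t => ?_, fun t ht => ?_⟩
  · rw [hcoord_sum t, Finset.sum_mul]
    refine le_trans (Finset.le_inf fun k _ => (hpiece k t).1)
      (v.nu_sum_ge _ (fun k => qCoeff P ((qCoeff P g k * c) * P ^ k) t * P ^ t))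
  · rw [hcoord_sum t, Finset.sum_mul]
    refine le_trans (Finset.le_inf fun k _ => (hpiece k t).2 ht)
      (v.nu_sum_ge _ (fun k => qCoeff P ((qCoeff P g k * c) * P ^ k) t * P ^ t))

include hP hn0 in
theorem SS_mul_pow
    (hE : ∀ g : Polynomial K, g ≠ 0 → g.natDegree ≠ 0 → g.natDegree < P.natDegree → v.eps g ≤ E)
    (hEP : E < v.eps P)
    {a b : Polynomial K} (ha : a ≠ 0) (hb : b ≠ 0)
    (hda : a.natDegree < P.natDegree) (hdb : b.natDegree < P.natDegree) (i : ℕ) :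
    v.SS P (v.eps P - E) (a * b ^ i) := by
  induction i with
  | zero =>
    rw [pow_zero, mul_one]
    exact v.SS_base hP hn0 ha hda _
  | succ i ih =>
    have : a * b ^ (i + 1) = (a * b ^ i) * b := by ring
    rw [this]
    exact v.SS_mul_small hP hn0 hE hEP ih hb hdb

end PolyVal

end Layer5
section Layer6

set_option linter.unusedSectionVars false

open Polynomial

namespace PolyVal

variable {K : Type*} [Field K] (v : PolyVal K)
variable {P : Polynomial K} (hP : P.Monic) (hn0 : 0 < P.natDegree)

theorem coe_nsmul_withTop (j : ℕ) (r : ℝ) :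
    j • ((r : ℝ) : WithTop ℝ) = ((j * r : ℝ) : WithTop ℝ) := by
  induction j with
  | zero => simp
  | succ j ih =>
    rw [succ_nsmul, ih, ← WithTop.coe_add, WithTop.coe_eq_coe]
    push_cast
    ring

theorem nu_nsmul_ge (m : ℕ) (x : Polynomial K) : v.ν x ≤ v.ν (m • x) := by
  rw [nsmul_eq_mul, v.ν_mul]
  calc v.ν x = 0 + v.ν x := by rw [zero_add]
    _ ≤ v.ν (m : Polynomial K) + v.ν x := add_le_add_left (v.nu_natCast_ge m) _

include hP hn0 in
/-- canonical coefficients of an expansion with small coefficients -/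
theorem qCoeff_eval (l : Polynomial (Polynomial K))
    (hl : ∀ i, (l.coeff i).natDegree < P.natDegree) (t : ℕ) :
    qCoeff P (eval P l) t = l.coeff t := by
  have hdeg : ∀ i, (l.coeff i).degree < P.degree := by
    intro i
    rw [degree_eq_natDegree hP.ne_zero]
    exact deg_lt_of_natDegree_lt hn0 (hl i)
  rw [eval_eq_sum_range]
  rw [qCoeff_sum_repr hP hn0 (fun i => l.coeff i) hdeg (l.natDegree + 1) t]
  by_cases ht : t < l.natDegree + 1
  · rw [if_pos ht]
  · rw [if_neg ht]
    exact (coeff_eq_zero_of_natDegree_lt (by omega)).symm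

/-- Taylor decomposition of `eval Q l` along `P`, where `h = Q - P`. -/
theorem taylor_decomp (l : Polynomial (Polynomial K)) (Q : Polynomial K) :
    eval Q l = ∑ j ∈ Finset.range ((taylor (Q - P) l).natDegree + 1),
      eval (Q - P) (hasseDeriv j l) * P ^ j := by
  have h1 : eval Q l = (taylor (Q - P) l).eval P := by
    rw [taylor_eval]
    congr 1
    ring
  rw [h1, eval_eq_sum_range]
  refine Finset.sum_congr rfl fun j _ => ?_
  rw [taylor_coeff]

include hP hn0 in
/-- the zeroth `P`-coordinate of `eval Q l` agrees with that of `eval (Q-P) l`. -/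
theorem qCoeff_zero_eval (l : Polynomial (Polynomial K)) (Q : Polynomial K) :
    qCoeff P (eval Q l) 0 = qCoeff P (eval (Q - P) l) 0 := by
  rw [taylor_decomp (P := P) l Q]
  rw [qCoeff_finsum hP hn0]
  rw [Finset.sum_eq_single 0]
  · rw [pow_zero, mul_one, hasseDeriv_zero']
  · intro j _ hj
    rw [qCoeff_mul_pow hP hn0 _ j 0, if_neg (by omega)]
  · intro h0
    simp only [Finset.mem_range] at h0
    omega

end PolyVal

end Layer6
section Layer7

set_option linter.unusedSectionVars false

open Polynomial

namespace PolyVal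

variable {K : Type*} [Field K] (v : PolyVal K)
variable {P : Polynomial K} (hP : P.Monic) (hn0 : 0 < P.natDegree)
variable {E : ℝ}

include hP hn0 in
/-- coordinates of `eval h l` for `l` with small coefficients and `h` small:
every coordinate is at least the minimum term value `c`, and positive coordinates
gain the slack `eps P - E`. -/
theorem eval_small_coords
    (hE : ∀ g : Polynomial K, g ≠ 0 → g.natDegree ≠ 0 → g.natDegree < P.natDegree → v.eps g ≤ E)
    (hEP : E < v.eps P)
    (l : Polynomial (Polynomial K)) (hl : ∀ i, (l.coeff i).natDegree < P.natDegree)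
    {h : Polynomial K} (hh : h ≠ 0) (hdh : h.natDegree < P.natDegree)
    {c : WithTop ℝ} (hc : ∀ i, c ≤ v.ν (l.coeff i * h ^ i)) :
    ∀ t, (c ≤ v.ν (qCoeff P (eval h l) t * P ^ t)) ∧
      (1 ≤ t → c + ((v.eps P - E : ℝ) : WithTop ℝ) ≤ v.ν (qCoeff P (eval h l) t * P ^ t)) := by
  intro t
  rw [eval_eq_sum_range]
  rw [qCoeff_finsum hP hn0, Finset.sum_mul]
  have hterm : ∀ i, (c ≤ v.ν (qCoeff P (l.coeff i * h ^ i) t * P ^ t)) ∧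
      (1 ≤ t → c + ((v.eps P - E : ℝ) : WithTop ℝ) ≤
        v.ν (qCoeff P (l.coeff i * h ^ i) t * P ^ t)) := by
    intro i
    by_cases h0 : l.coeff i = 0
    · rw [h0, zero_mul, qCoeff_zero_poly, zero_mul, v.nu0]
      exact ⟨le_top, fun _ => le_top⟩
    · have hss := v.SS_mul_pow hP hn0 hE hEP h0 hh (hl i) hdh i
      exact ⟨le_trans (hc i) (hss.2.1 t), fun ht =>
        le_trans (add_le_add_left (hc i) _) (hss.2.2 t ht)⟩
  constructor
  · exact le_trans (Finset.le_inf fun i _ => (hterm i).1)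
      (v.nu_sum_ge _ (fun i => qCoeff P (l.coeff i * h ^ i) t * P ^ t))
  · intro ht
    exact le_trans (Finset.le_inf fun i _ => (hterm i).2 ht)
      (v.nu_sum_ge _ (fun i => qCoeff P (l.coeff i * h ^ i) t * P ^ t))

include hP hn0 in
/-- tier bound: the positive `P`-coordinates of `eval Q L` are bounded below by
`mF + min (rP - rQ) (eps P - E)`. -/
theorem tier_coords
    (hE : ∀ g : Polynomial K, g ≠ 0 → g.natDegree ≠ 0 → g.natDegree < P.natDegree → v.eps g ≤ E)
    (hEP : E < v.eps P)
    (Q : Polynomial K) (hh0 : Q - P ≠ 0) (hdh : (Q - P).natDegree < P.natDegree)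
    {rQ rP : ℝ} (hhQ : v.ν (Q - P) = ((rQ : ℝ) : WithTop ℝ))
    (hPco : v.ν P = ((rP : ℝ) : WithTop ℝ)) (hδ : rQ ≤ rP)
    (L : Polynomial (Polynomial K)) (hL : ∀ i, (L.coeff i).natDegree < P.natDegree)
    {mF : ℝ}
    (hmF : ∀ i j : ℕ, ((mF - j * rQ : ℝ) : WithTop ℝ) ≤ v.ν (L.coeff (i + j) * (Q - P) ^ i)) :
    ∀ t, 1 ≤ t → ((mF + min (rP - rQ) (v.eps P - E) : ℝ) : WithTop ℝ) ≤
      v.ν (qCoeff P (eval Q L) t * P ^ t) := by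
  intro t ht
  rw [taylor_decomp (P := P) L Q]
  rw [qCoeff_finsum hP hn0, Finset.sum_mul]
  refine le_trans (Finset.le_inf fun j _ => ?_)
    (v.nu_sum_ge _ (fun j => qCoeff P (eval (Q - P) (hasseDeriv j L) * P ^ j) t * P ^ t))
  -- bound for tier j
  rcases lt_or_ge t j with htj | htj
  · rw [qCoeff_mul_pow hP hn0 _ j t, if_neg (by omega), zero_mul, v.nu0]
    exact le_top
  · have hcoord := coord_mul_pow v hP hn0 (eval (Q - P) (hasseDeriv j L)) j t htj
    rw [hcoord]
    -- inner coordinates of B_j = eval (Q-P) (hasseDeriv j L)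
    have hLj : ∀ i, ((hasseDeriv j L).coeff i).natDegree < P.natDegree := by
      intro i
      rw [hasseDeriv_coeff]
      refine lt_of_le_of_lt (le_trans natDegree_mul_le ?_) (hL (i + j))
      simp [natDegree_natCast]
    have hcj : ∀ i, (((mF - j * rQ : ℝ) : WithTop ℝ)) ≤
        v.ν ((hasseDeriv j L).coeff i * (Q - P) ^ i) := by
      intro i
      rw [hasseDeriv_coeff, mul_assoc, v.ν_mul]
      refine le_trans (le_trans (hmF i j) ?_) le_rfl
      calc v.ν (L.coeff (i + j) * (Q - P) ^ i)
          = 0 + v.ν (L.coeff (i + j) * (Q - P) ^ i) := (zero_add _).symm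
        _ ≤ v.ν ((((i + j).choose j : ℕ) : Polynomial K)) +
            v.ν (L.coeff (i + j) * (Q - P) ^ i) :=
            add_le_add_left (v.nu_natCast_ge _) _
    have hinner := v.eval_small_coords hP hn0 hE hEP (hasseDeriv j L) hLj hh0 hdh hcj (t - j)
    have hsm : j • v.ν P = ((j * rP : ℝ) : WithTop ℝ) := by
      rw [hPco, coe_nsmul_withTop]
    rcases Nat.eq_zero_or_pos (t - j) with hm0 | hm1
    · -- t = j ≥ 1 : use the δ gain
      have hj1 : 1 ≤ j := by omega
      refine le_trans ?_ (add_le_add_left (hinner.1) _)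
      rw [hsm, ← WithTop.coe_add, WithTop.coe_le_coe]
      have hj1' : (1 : ℝ) ≤ j := by exact_mod_cast hj1
      have : min (rP - rQ) (v.eps P - E) ≤ rP - rQ := min_le_left _ _
      nlinarith [(by linarith : (0:ℝ) ≤ (j : ℝ) - 1), (by linarith : (0:ℝ) ≤ rP - rQ)]
    · -- t > j : use the σ gain
      refine le_trans ?_ (add_le_add_left (hinner.2 hm1) _)
      rw [hsm, ← WithTop.coe_add, ← WithTop.coe_add, WithTop.coe_le_coe]
      have hj0 : (0 : ℝ) ≤ j := by positivity
      have : min (rP - rQ) (v.eps P - E) ≤ v.eps P - E := min_le_right _ _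
      nlinarith [mul_nonneg hj0 (by linarith : (0:ℝ) ≤ rP - rQ)]

end PolyVal

end Layer7
section Layer8

set_option linter.unusedSectionVars false

open Polynomial

namespace PolyVal

variable {K : Type*} [Field K] (v : PolyVal K)

/-- For `Q, P` monic of the same positive degree with `eps Q < eps P` (and `Q` key),
we get `Q ≠ P`, `ν(Q-P) = ν Q`, and `ν Q < ν P`. -/
theorem key_diff {Q P : Polynomial K} (hKQ : v.IsKeyPol Q)
    (hQm : Q.Monic) (hPm : P.Monic) (hdeg : Q.natDegree = P.natDegree)
    (hn0 : 0 < Q.natDegree) (hQP : v.eps Q < v.eps P) :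
    Q - P ≠ 0 ∧ (Q - P).natDegree < Q.natDegree ∧
      v.ν (Q - P) = ((v.vr Q : ℝ) : WithTop ℝ) ∧ v.vr Q < v.vr P := by
  have hQ0 : Q ≠ 0 := hQm.ne_zero
  have hP0 : P ≠ 0 := hPm.ne_zero
  have hh0 : Q - P ≠ 0 := by
    intro h
    have : Q = P := by linear_combination h
    rw [this] at hQP
    exact lt_irrefl _ hQP
  set h := Q - P with hh
  have hdh : h.natDegree < Q.natDegree := by
    have hd : h.degree < Q.degree := by
      refine degree_sub_lt ?_ hQ0 ?_
      · rw [degree_eq_natDegree hQ0, degree_eq_natDegree hP0, hdeg]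
      · rw [hQm.leadingCoeff, hPm.leadingCoeff]
    exact natDegree_lt_natDegree hh0 hd
  set rQ := v.vr Q with hrQ
  set rP := v.vr P with hrP
  set rh := v.vr h with hrh
  have hQco : v.ν Q = ((rQ : ℝ) : WithTop ℝ) := v.vr_coe hQ0
  have hPco : v.ν P = ((rP : ℝ) : WithTop ℝ) := v.vr_coe hP0
  have hhco : v.ν h = ((rh : ℝ) : WithTop ℝ) := v.vr_coe hh0
  have hPn : P.natDegree ≠ 0 := by omega
  -- argmax of P
  obtain ⟨k, hk1, hkn, hdk, hmax⟩ := v.eps_argmax hPn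
  have hkpos : (0 : ℝ) < k := by exact_mod_cast hk1
  have hder : v.ν (hasseDeriv k P) = ((rP - k * v.eps P : ℝ) : WithTop ℝ) := by
    rw [v.vr_coe hdk, WithTop.coe_eq_coe]
    have : v.eps P * k = rP - v.vr (hasseDeriv k P) := by
      rw [hmax]
      field_simp
      rfl
    linarith
  -- bounds on ∂Q and ∂h
  have hEh : h ≠ 0 → h.natDegree ≠ 0 → v.eps h ≤ v.eps Q :=
    fun _ h2 => (v.eps_lt_key hKQ h2 hdh).le
  have bQ : ((rQ - k * v.eps Q : ℝ) : WithTop ℝ) ≤ v.ν (hasseDeriv k Q) := by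
    refine coe_sub_le ?_
    rw [← hQco]
    exact v.deriv_ge Q (fun _ _ => le_rfl) k
  have bh : ((rh - k * v.eps Q : ℝ) : WithTop ℝ) ≤ v.ν (hasseDeriv k h) := by
    refine coe_sub_le ?_
    rw [← hhco]
    exact v.deriv_ge h hEh k
  -- ∂P = ∂Q - ∂h
  have hsub : hasseDeriv k P = hasseDeriv k Q - hasseDeriv k h := by
    have : P = Q - h := by rw [hh]; ring
    rw [this]
    exact map_sub _ _ _
  have hmin : min (rQ - k * v.eps Q) (rh - k * v.eps Q) ≤ rP - k * v.eps P := by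
    have h1 : min ((rQ - k * v.eps Q : ℝ) : WithTop ℝ) ((rh - k * v.eps Q : ℝ) : WithTop ℝ) ≤
        v.ν (hasseDeriv k P) := by
      rw [hsub]
      exact le_trans (min_le_min bQ bh) (v.nu_sub_ge _ _)
    rw [hder, ← WithTop.coe_min, WithTop.coe_le_coe] at h1
    exact h1
  -- ultrametric relations among Q, P, h
  have rel1 : min rP rh ≤ rQ := by
    have : min (v.ν P) (v.ν h) ≤ v.ν Q := by
      have hQeq : Q = P + h := by rw [hh]; ring
      rw [hQeq]
      exact v.ν_add P h
    rw [hQco, hPco, hhco, ← WithTop.coe_min, WithTop.coe_le_coe] at this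
    exact this
  have rel2 : min rQ rP ≤ rh := by
    have : min (v.ν Q) (v.ν P) ≤ v.ν h := v.nu_sub_ge Q P
    rw [hQco, hPco, hhco, ← WithTop.coe_min, WithTop.coe_le_coe] at this
    exact this
  -- real deduction
  have hk1' : (1 : ℝ) ≤ k := by exact_mod_cast hk1
  have hgap : 0 < v.eps P - v.eps Q := by linarith
  have hPgt : min rQ rh < rP := by
    rcases min_le_iff.1 hmin with h1 | h1
    · have : min rQ rh ≤ rQ := min_le_left _ _
      nlinarith [(by linarith : (0:ℝ) ≤ (k:ℝ) - 1), min_le_left rQ rh]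
    · nlinarith [(by linarith : (0:ℝ) ≤ (k:ℝ) - 1), min_le_right rQ rh]
  have hrhle : rh ≤ rQ := by
    by_contra hc
    push_neg at hc
    have h1 : min rQ rh = rQ := min_eq_left hc.le
    rw [h1] at hPgt
    rcases min_le_iff.1 rel1 with h2 | h2 <;> linarith
  have hfin1 : rh = rQ := by
    have h1 : min rQ rh = rh := min_eq_right hrhle
    rw [h1] at hPgt
    rcases min_le_iff.1 rel2 with h2 | h2 <;> linarith
  have hfin2 : rQ < rP := by
    rw [← hfin1]
    rw [min_eq_right hrhle] at hPgt
    rw [hfin1] at hPgt ⊢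
    exact hPgt
  exact ⟨hh0, hdh, by rw [hhco, hfin1], hfin2⟩

variable {Q : Polynomial K} (hQm : Q.Monic) (hq0 : 0 < Q.natDegree)
variable {EQ : ℝ}

include hQm hq0 in
/-- coordinates w.r.t. `Q` of `a' * (Q - h)^k` are all at least `ν a' + k rQ`,
when `ν h = ν Q = rQ`. -/
theorem pow_back_coords
    (hE : ∀ g : Polynomial K, g ≠ 0 → g.natDegree ≠ 0 → g.natDegree < Q.natDegree → v.eps g ≤ EQ)
    (hEP : EQ < v.eps Q)
    {h : Polynomial K} (hh : h ≠ 0) (hdh : h.natDegree < Q.natDegree)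
    {rQ : ℝ} (hhco : v.ν h = ((rQ : ℝ) : WithTop ℝ)) (hQco : v.ν Q = ((rQ : ℝ) : WithTop ℝ))
    {a' : Polynomial K} (ha' : a' ≠ 0) (hda' : a'.natDegree < Q.natDegree) (k : ℕ) :
    ∀ m, ((v.vr a' + k * rQ : ℝ) : WithTop ℝ) ≤ v.ν (qCoeff Q (a' * (Q - h) ^ k) m * Q ^ m) := by
  intro m
  have hexp : a' * (Q - h) ^ k =
      ∑ t ∈ Finset.range (k + 1), (a' * ((k.choose t : ℕ) : Polynomial K) * (-h) ^ (k - t)) * Q ^ t := by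
    rw [sub_eq_add_neg, add_pow]
    rw [Finset.mul_sum]
    refine Finset.sum_congr rfl fun t _ => ?_
    push_cast
    ring
  rw [hexp, qCoeff_finsum hQm hq0, Finset.sum_mul]
  refine le_trans (Finset.le_inf fun t htm => ?_)
    (v.nu_sum_ge _ (fun t => qCoeff Q ((a' * ((k.choose t : ℕ) : Polynomial K) * (-h) ^ (k - t)) * Q ^ t) m * Q ^ m))
  have htk : t ≤ k := by
    simp only [Finset.mem_range] at htm
    omega
  by_cases hC : (((k.choose t : ℕ) : Polynomial K)) = 0
  · rw [hC, mul_zero, zero_mul, zero_mul, qCoeff_zero_poly, zero_mul, v.nu0]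
    exact le_top
  set g := a' * ((k.choose t : ℕ) : Polynomial K) with hg
  have hg0 : g ≠ 0 := mul_ne_zero ha' hC
  have hdg : g.natDegree < Q.natDegree := by
    refine lt_of_le_of_lt (le_trans natDegree_mul_le ?_) hda'
    simp [natDegree_natCast]
  have hnh : (-h : Polynomial K) ≠ 0 := neg_ne_zero.2 hh
  have hdnh : (-h : Polynomial K).natDegree < Q.natDegree := by rwa [natDegree_neg]
  have hss := v.SS_mul_pow hQm hq0 hE hEP hg0 hnh hdg hdnh (k - t)
  have hval : ((v.vr a' + (k - t : ℕ) * rQ : ℝ) : WithTop ℝ) ≤ v.ν (g * (-h) ^ (k - t)) := by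
    rw [v.ν_mul, hg, v.ν_mul, v.nu_pow, v.nu_neg, hhco, coe_nsmul_withTop,
      v.vr_coe ha']
    calc ((v.vr a' + (k - t : ℕ) * rQ : ℝ) : WithTop ℝ)
        = ((v.vr a' : ℝ) : WithTop ℝ) + 0 + (((k - t : ℕ) * rQ : ℝ) : WithTop ℝ) := by
          rw [add_zero, ← WithTop.coe_add]
      _ ≤ ((v.vr a' : ℝ) : WithTop ℝ) + v.ν (((k.choose t : ℕ) : Polynomial K)) +
          (((k - t : ℕ) * rQ : ℝ) : WithTop ℝ) := by
          refine add_le_add_left (add_le_add_right (v.nu_natCast_ge _) _) _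
  rcases lt_or_ge m t with hmt | hmt
  · rw [qCoeff_mul_pow hQm hq0 _ t m, if_neg (by omega), zero_mul, v.nu0]
    exact le_top
  · rw [coord_mul_pow v hQm hq0 _ t m hmt]
    have hinner := (hss.2.1 (m - t))
    refine le_trans ?_ (add_le_add_left (le_trans hval hinner) _)
    rw [hQco, coe_nsmul_withTop, ← WithTop.coe_add, WithTop.coe_le_coe]
    have h1 : ((k - t : ℕ) : ℝ) = (k : ℝ) - t := by
      have : (t : ℝ) ≤ k := by exact_mod_cast htk
      push_cast [htk]
      ring
    rw [h1]
    nlinarith [sq_nonneg ((t : ℝ))]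

end PolyVal

end Layer8
section Layer9

set_option linter.unusedSectionVars false

open Polynomial

namespace PolyVal

variable {K : Type*} [Field K] (v : PolyVal K)

theorem nuQ_zero (P : Polynomial K) : v.nuQ P 0 = ⊤ := by
  unfold nuQ
  simp only [natDegree_zero, Nat.zero_div, zero_add, Finset.range_one, Finset.inf_singleton]
  rw [qCoeff_zero_poly, zero_mul, v.nu0]

variable {Q : Polynomial K} (hQm : Q.Monic) (hq0 : 0 < Q.natDegree)
variable {EQ : ℝ}

include hQm hq0 in
/-- comparison between the two truncations: `ν_{Q'}(f) ≤ ν_Q(f) + r'·(rQ' - rQ)`. -/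
theorem nuQ_compare
    (hE : ∀ g : Polynomial K, g ≠ 0 → g.natDegree ≠ 0 → g.natDegree < Q.natDegree → v.eps g ≤ EQ)
    (hEP : EQ < v.eps Q)
    {Q' : Polynomial K} (hQ'm : Q'.Monic) (hdeg : Q'.natDegree = Q.natDegree)
    {h : Polynomial K} (hQ'h : Q' = Q - h) (hh : h ≠ 0) (hdh : h.natDegree < Q.natDegree)
    {rQ rQ' : ℝ} (hhco : v.ν h = ((rQ : ℝ) : WithTop ℝ))
    (hQco : v.ν Q = ((rQ : ℝ) : WithTop ℝ)) (hQ'co : v.ν Q' = ((rQ' : ℝ) : WithTop ℝ))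
    (hδ : rQ ≤ rQ') (f : Polynomial K) :
    v.nuQ Q' f ≤ v.nuQ Q f +
      (((f.natDegree / Q'.natDegree : ℕ) * (rQ' - rQ) : ℝ) : WithTop ℝ) := by
  rcases eq_or_ne f 0 with rfl | hf0
  · rw [v.nuQ_zero Q]
    simp
  set r' := f.natDegree / Q'.natDegree with hr'
  have hq0' : 0 < Q'.natDegree := by omega
  have hN : f.natDegree < (r' + 1) * Q'.natDegree := div_deg_lt_succ_mul _ _ hq0'
  have hexp := expansion hQ'm hq0' f r' hN
  have hinf := v.nuQ_finsum_ge hQm hq0 (Finset.range (r' + 1))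
    (fun k => qCoeff Q' f k * Q' ^ k)
  rw [← hexp] at hinf
  obtain ⟨kk, hkmem, hkeq⟩ := Finset.exists_mem_eq_inf (Finset.range (r' + 1))
    ⟨0, Finset.mem_range.2 (Nat.succ_pos _)⟩
    (fun k => v.nuQ Q (qCoeff Q' f k * Q' ^ k))
  have hW : v.nuQ Q (qCoeff Q' f kk * Q' ^ kk) ≤ v.nuQ Q f := le_trans (le_of_eq hkeq.symm) hinf
  have hkr : kk ≤ r' := by
    have := Finset.mem_range.1 hkmem
    omega
  by_cases ha0 : qCoeff Q' f kk = 0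
  · rw [ha0, zero_mul] at hW
    rw [v.nuQ_zero Q] at hW
    have : v.nuQ Q f = ⊤ := le_antisymm le_top hW
    rw [this]
    simp
  -- main case
  have hda : (qCoeff Q' f kk).natDegree < Q.natDegree := by
    rw [← hdeg]
    exact natDegree_lt_natDegree ha0 (degree_modByMonic_lt _ hQ'm)
  have hlow : ((v.vr (qCoeff Q' f kk) + kk * rQ : ℝ) : WithTop ℝ) ≤
      v.nuQ Q (qCoeff Q' f kk * Q' ^ kk) := by
    refine v.le_nuQ _ fun m => ?_
    have := v.pow_back_coords hQm hq0 hE hEP hh hdh hhco hQco ha0 hda kk m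
    rw [← hQ'h] at this
    exact this
  have hup : v.nuQ Q' f ≤ ((v.vr (qCoeff Q' f kk) + kk * rQ' : ℝ) : WithTop ℝ) := by
    have h1 := v.nuQ_le_coord hQ'm hq0' f kk
    refine le_trans h1 (le_of_eq ?_)
    rw [v.ν_mul, v.nu_pow, hQ'co, coe_nsmul_withTop, v.vr_coe ha0, ← WithTop.coe_add]
  refine le_trans hup ?_
  refine le_trans ?_ (add_le_add_left (le_trans hlow hW) _)
  rw [← WithTop.coe_add, WithTop.coe_le_coe]
  have hkr' : (kk : ℝ) ≤ r' := by exact_mod_cast hkr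
  nlinarith [(by linarith : (0:ℝ) ≤ rQ' - rQ)]

end PolyVal

end Layer9
/-- Proposition `spivdevemostrarpamim`: for `f = l(Q)` with `deg_X f ≤ d` and
`Q' ∈ Ψ_n` with `ε(Q) < ε(Q')`, setting `h = Q − Q'`, one has `ν_{Q'}(l(h)) ≥ ν_{Q'}(f)`,
with equality iff `ν(a₀) = ν_{Q'}(f) = ν(l(h))`, where `a₀` is the constant coefficient of
the `Q'`-expansion of `f`. -/
theorem stmt_5
    (v : PolyVal K) (n : ℕ) (hn : 0 < n)
    -- `Ψ_n` is nonempty, bounded, and `ν(Ψ_n)` has no maximum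
    (hne : (v.Psi n).Nonempty)
    (hbd : ∃ a : Polynomial K, ∀ Q' ∈ v.Psi n, v.ν Q' < v.ν a)
    (hnomax : ∀ Q' ∈ v.Psi n, ∃ Q'' ∈ v.Psi n, v.ν Q' < v.ν Q'')
    -- a fixed limit key polynomial `F` for `Ψ_n`, `d = deg_X F`
    (F : Polynomial K) (hF : v.IsLimitKeyPol n F)
    (d : ℕ) (hd : d = F.natDegree / n)
    -- `B = sup ν(Ψ_n)` and `B̄ = sup {ν_{Q'}(F)}`
    (B Bbar : ℝ)
    (hB : B = sSup {x : ℝ | ∃ Q' ∈ v.Psi n, v.ν Q' = (x : WithTop ℝ)})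
    (hBbar : Bbar = sSup {x : ℝ | ∃ Q' ∈ v.Psi n, v.nuQ Q' F = (x : WithTop ℝ)})
    -- the fixed key polynomials `Q₀` and `Q`
    (Q₀ Q : Polynomial K) (hQ₀ : Q₀ ∈ v.Psi n) (hQmem : Q ∈ v.Psi n)
    (hQgap1 : v.eps Q - v.eps Q₀ > d * (B - v.vr Q))
    (hQgap2 : v.eps Q - v.eps Q₀ > Bbar - v.nuQr Q F)
    -- `F = L(Q)` is the `Q`-expansion of `F`
    (L : Polynomial (Polynomial K)) (hLcoeff : ∀ i : ℕ, (L.coeff i).natDegree < n)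
    (hLF : F = eval Q L)
    (f : Polynomial K) (hf : f ≠ 0) (hdf : f.natDegree / n ≤ d)
    (l : Polynomial (Polynomial K)) (hlc : ∀ i : ℕ, (l.coeff i).natDegree < n)
    (hlf : f = eval Q l)
    (Q' : Polynomial K) (hQ' : Q' ∈ v.Psi n) (hQQ' : v.eps Q < v.eps Q') :
    v.nuQ Q' f ≤ v.nuQ Q' (eval (Q - Q') l) ∧
    (v.nuQ Q' (eval (Q - Q') l) = v.nuQ Q' f ↔
      (v.ν (qCoeff Q' f 0) = v.nuQ Q' f ∧ v.nuQ Q' f = v.ν (eval (Q - Q') l))) := by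
  classical
  have hQm : Q.Monic := hQmem.1.1
  have hQn : Q.natDegree = n := hQmem.2
  have hQ'm : Q'.Monic := hQ'.1.1
  have hQ'n : Q'.natDegree = n := hQ'.2
  have hQ₀n : Q₀.natDegree = n := hQ₀.2
  have hq0 : 0 < Q.natDegree := by omega
  have hq0' : 0 < Q'.natDegree := by omega
  set E := v.eps Q₀ with hEdef
  have hEsm : ∀ g : Polynomial K, g ≠ 0 → g.natDegree ≠ 0 → g.natDegree < n → v.eps g ≤ E := by
    intro g _ h2 h3
    exact (v.eps_lt_key hQ₀.1 h2 (by omega)).le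
  have hEsmQ : ∀ g : Polynomial K, g ≠ 0 → g.natDegree ≠ 0 → g.natDegree < Q.natDegree →
      v.eps g ≤ E := fun g h1 h2 h3 => hEsm g h1 h2 (by omega)
  have hEsmQ' : ∀ g : Polynomial K, g ≠ 0 → g.natDegree ≠ 0 → g.natDegree < Q'.natDegree →
      v.eps g ≤ E := fun g h1 h2 h3 => hEsm g h1 h2 (by omega)
  -- F facts
  have hF0 : F ≠ 0 := hF.1.ne_zero
  obtain ⟨rF, hrF⟩ := v.exists_real hF0
  have hnuQF_le : v.nuQ Q F ≤ v.ν F := v.nuQ_le_nu hQm hq0 F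
  have hmQF_ne : v.nuQ Q F ≠ ⊤ := by
    intro hx
    rw [hx, hrF] at hnuQF_le
    exact absurd hnuQF_le (by simp)
  obtain ⟨mQF, hmQF⟩ := WithTop.ne_top_iff_exists.1 hmQF_ne
  have hnuQrF : v.nuQr Q F = mQF := by
    unfold PolyVal.nuQr
    rw [← hmQF]
    rfl
  -- Bbar is a genuine sup
  have hBbar_bdd : BddAbove {x : ℝ | ∃ Q'' ∈ v.Psi n, v.nuQ Q'' F = (x : WithTop ℝ)} := by
    refine ⟨rF, ?_⟩
    rintro x ⟨P, hPmem, hxP⟩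
    have hp0 : 0 < P.natDegree := by rw [hPmem.2]; exact hn
    have h1 : v.nuQ P F ≤ v.ν F := v.nuQ_le_nu hPmem.1.1 hp0 F
    rw [hxP, hrF, WithTop.coe_le_coe] at h1
    exact h1
  have hmQF_le_Bbar : mQF ≤ Bbar := by
    rw [hBbar]
    exact le_csSup hBbar_bdd ⟨Q, hQmem, hmQF.symm⟩
  have hgap2 : Bbar - mQF < v.eps Q - E := by
    rw [hnuQrF] at hQgap2
    linarith
  have hEQ : E < v.eps Q := by linarith
  have hEQ' : E < v.eps Q' := lt_trans hEQ hQQ'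
  -- key_diff for (Q, Q')
  obtain ⟨hh0, hdh, hhco, hrQltQ'⟩ := v.key_diff hQmem.1 hQm hQ'm (by omega) hq0 hQQ'
  set rQ := v.vr Q with hrQdef
  set rQ' := v.vr Q' with hrQ'def
  have hQco : v.ν Q = ((rQ : ℝ) : WithTop ℝ) := v.vr_coe hQm.ne_zero
  have hQ'co : v.ν Q' = ((rQ' : ℝ) : WithTop ℝ) := v.vr_coe hQ'm.ne_zero
  -- Bootstrap: all key values are bounded
  have hbound : ∀ P ∈ v.Psi n, v.vr P ≤ max ((n : ℝ) * v.eps Q) (rQ + (Bbar - mQF)) := by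
    rintro P hPmem
    have hPm : P.Monic := hPmem.1.1
    have hPn : P.natDegree = n := hPmem.2
    have hp0 : 0 < P.natDegree := by omega
    rcases le_or_gt (v.eps P) (v.eps Q) with hPQ | hPQ
    · refine le_trans ?_ (le_max_left _ _)
      have h1 := v.vr_le_deg_mul_eps hPm hp0
      have h2 : (P.natDegree : ℝ) * v.eps P ≤ (n : ℝ) * v.eps Q := by
        rw [hPn]
        exact mul_le_mul_of_nonneg_left hPQ (by positivity)
      linarith
    · refine le_trans ?_ (le_max_right _ _)
      obtain ⟨hhP0, hdhP, hhPco, hrQP⟩ := v.key_diff hQmem.1 hQm hPm (by omega) hq0 hPQ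
      set rP := v.vr P with hrPdef
      have hPco : v.ν P = ((rP : ℝ) : WithTop ℝ) := v.vr_coe hPm.ne_zero
      have hEP : E < v.eps P := lt_trans hEQ hPQ
      have hEsmP : ∀ g : Polynomial K, g ≠ 0 → g.natDegree ≠ 0 → g.natDegree < P.natDegree →
          v.eps g ≤ E := fun g h1 h2 h3 => hEsm g h1 h2 (by omega)
      -- lower bounds on the L-coefficients
      have hmF : ∀ i j : ℕ, ((mQF - j * rQ : ℝ) : WithTop ℝ) ≤
          v.ν (L.coeff (i + j) * (Q - P) ^ i) := by
        intro i j
        rcases eq_or_ne (L.coeff (i + j)) 0 with h0 | h0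
        · rw [h0, zero_mul, v.nu0]
          exact le_top
        have h2 : qCoeff Q F (i + j) = L.coeff (i + j) := by
          rw [hLF]
          exact PolyVal.qCoeff_eval hQm hq0 L (fun j' => by rw [hQn]; exact hLcoeff j') (i + j)
        have h3 := v.nuQ_le_coord hQm hq0 F (i + j)
        rw [h2, ← hmQF] at h3
        have hLreal := v.vr_coe h0
        have hLQ : v.ν (L.coeff (i + j) * Q ^ (i + j)) =
            ((v.vr (L.coeff (i + j)) + (i + j : ℕ) * rQ : ℝ) : WithTop ℝ) := by
          rw [v.ν_mul, v.nu_pow, hQco, PolyVal.coe_nsmul_withTop, hLreal, ← WithTop.coe_add]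
        have hLh : v.ν (L.coeff (i + j) * (Q - P) ^ i) =
            ((v.vr (L.coeff (i + j)) + (i : ℕ) * rQ : ℝ) : WithTop ℝ) := by
          rw [v.ν_mul, v.nu_pow, hhPco, PolyVal.coe_nsmul_withTop, hLreal, ← WithTop.coe_add]
        rw [hLh]
        rw [hLQ, WithTop.coe_le_coe] at h3
        rw [WithTop.coe_le_coe]
        push_cast at h3 ⊢
        linarith
      have htier := v.tier_coords hPm hp0 hEsmP hEP Q hhP0 (by omega) hhPco hPco
        (le_of_lt hrQP) L (fun j' => by rw [hPn]; exact hLcoeff j') hmF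
      set μ := min (rP - rQ) (v.eps P - E) with hμ
      -- coordinate 0 bound
      have hcoord0 : min ((rF : ℝ) : WithTop ℝ) ((mQF + μ : ℝ) : WithTop ℝ) ≤
          v.ν (qCoeff P F 0 * P ^ 0) := by
        have hNF : F.natDegree < (F.natDegree / P.natDegree + 1) * P.natDegree :=
          PolyVal.div_deg_lt_succ_mul _ _ hp0
        have hexpF := expansion hPm hp0 F (F.natDegree / P.natDegree) hNF
        rw [Finset.sum_range_succ' (fun k => qCoeff P F k * P ^ k)] at hexpF
        have hpeel : qCoeff P F 0 * P ^ 0 = F - ∑ i ∈ Finset.range (F.natDegree / P.natDegree),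
            qCoeff P F (i + 1) * P ^ (i + 1) := by
          rw [eq_sub_iff_add_eq, add_comm]
          exact hexpF.symm
        rw [hpeel]
        refine le_trans (min_le_min (le_of_eq hrF.symm) ?_) (v.nu_sub_ge F _)
        refine le_trans (Finset.le_inf fun i _ => ?_)
          (v.nu_sum_ge _ (fun i => qCoeff P F (i + 1) * P ^ (i + 1)))
        have := htier (i + 1) (by omega)
        rw [← hLF] at this
        exact this
      have hlow : ∀ t, ((min rF (mQF + μ) : ℝ) : WithTop ℝ) ≤ v.ν (qCoeff P F t * P ^ t) := by
        intro t
        cases t with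
        | zero =>
          rw [WithTop.coe_min]
          exact hcoord0
        | succ t =>
          have := htier (t + 1) (by omega)
          rw [← hLF] at this
          exact le_trans (WithTop.coe_le_coe.2 (min_le_right _ _)) this
      have hnuPF : ((min rF (mQF + μ) : ℝ) : WithTop ℝ) ≤ v.nuQ P F := v.le_nuQ _ hlow
      have hnotst : v.nuQ P F ≠ v.ν F := fun hst => hF.2.1 ⟨P, hPmem, hst⟩
      have hnuPF_le : v.nuQ P F ≤ ((rF : ℝ) : WithTop ℝ) := by
        rw [← hrF]
        exact v.nuQ_le_nu hPm hp0 F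
      have hnuPF_ne : v.nuQ P F ≠ ⊤ := fun hx => by
        rw [hx] at hnuPF_le
        exact absurd hnuPF_le (by simp)
      obtain ⟨xP, hxP⟩ := WithTop.ne_top_iff_exists.1 hnuPF_ne
      have hxPB : xP ≤ Bbar := by
        rw [hBbar]
        exact le_csSup hBbar_bdd ⟨P, hPmem, hxP.symm⟩
      have h5 : min rF (mQF + μ) ≤ xP := by
        rw [← hxP] at hnuPF
        exact_mod_cast hnuPF
      rcases le_or_gt rF (mQF + μ) with hc | hc
      · exfalso
        refine hnotst (le_antisymm (by rw [hrF]; exact hnuPF_le) ?_)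
        rw [hrF]
        refine le_trans ?_ hnuPF
        rw [WithTop.coe_le_coe, min_eq_left hc]
      · have h6 : mQF + μ ≤ Bbar := by
          rw [min_eq_right hc.le] at h5
          linarith
        have h7 : μ < v.eps P - E := by
          calc μ ≤ Bbar - mQF := by linarith
            _ < v.eps Q - E := hgap2
            _ ≤ v.eps P - E := by linarith
        have h8 : μ = rP - rQ := by
          rcases le_total (rP - rQ) (v.eps P - E) with hl | hl
          · rw [hμ, min_eq_left hl]
          · exfalso
            rw [hμ, min_eq_right hl] at h7
            exact lt_irrefl _ h7
        have : rP - rQ ≤ Bbar - mQF := by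
          rw [← h8]
          linarith
        linarith
  -- B is a genuine sup, bounding rQ'
  have hB_bdd : BddAbove {x : ℝ | ∃ Q'' ∈ v.Psi n, v.ν Q'' = (x : WithTop ℝ)} := by
    refine ⟨max ((n : ℝ) * v.eps Q) (rQ + (Bbar - mQF)), ?_⟩
    rintro x ⟨P, hPmem, hxco⟩
    have hx : x = v.vr P := by
      have h1 := v.vr_coe hPmem.1.1.ne_zero
      rw [h1] at hxco
      exact_mod_cast hxco.symm
    rw [hx]
    exact hbound P hPmem
  have hQ'B : rQ' ≤ B := by
    rw [hB]
    exact le_csSup hB_bdd ⟨Q', hQ', hQ'co⟩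
  have hδB : rQ' - rQ ≤ B - rQ := by linarith
  have hgap1 : (d : ℝ) * (B - rQ) < v.eps Q - E := by linarith [hQgap1]
  have hδnn : (0 : ℝ) ≤ rQ' - rQ := by linarith
  -- the Q-truncation of f is real
  have hnuQf_le : v.nuQ Q f ≤ v.ν f := v.nuQ_le_nu hQm hq0 f
  obtain ⟨rf, hrf⟩ := v.exists_real hf
  have hnuQf_ne : v.nuQ Q f ≠ ⊤ := fun hx => by
    rw [hx, hrf] at hnuQf_le
    exact absurd hnuQf_le (by simp)
  obtain ⟨rmQ, hrmQ⟩ := WithTop.ne_top_iff_exists.1 hnuQf_ne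
  -- C4 comparison
  set h := Q - Q' with hhdef
  have hQ'h : Q' = Q - h := by rw [hhdef]; ring
  have hC4 := v.nuQ_compare hQm hq0 hEsmQ hEQ hQ'm (by omega) hQ'h hh0 hdh
    hhco hQco hQ'co (le_of_lt hrQltQ') f
  set r' := f.natDegree / Q'.natDegree with hr'def
  have hr'd : r' ≤ d := by
    rw [hr'def, hQ'n]
    exact hdf
  have hC4' : v.nuQ Q' f ≤ ((rmQ + (r' : ℝ) * (rQ' - rQ) : ℝ) : WithTop ℝ) := by
    rw [← hrmQ] at hC4
    rw [← WithTop.coe_add] at hC4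
    exact hC4
  have hstrict_num : rmQ + (r' : ℝ) * (rQ' - rQ) < rmQ + (v.eps Q' - E) := by
    have h1 : (r' : ℝ) * (rQ' - rQ) ≤ (d : ℝ) * (rQ' - rQ) :=
      mul_le_mul_of_nonneg_right (by exact_mod_cast hr'd) hδnn
    have h2 : (d : ℝ) * (rQ' - rQ) ≤ (d : ℝ) * (B - rQ) :=
      mul_le_mul_of_nonneg_left hδB (by positivity)
    have h3 : v.eps Q - E < v.eps Q' - E := by linarith
    linarith
  -- C3: coordinates of eval h l
  have hcval : ∀ i, ((rmQ : ℝ) : WithTop ℝ) ≤ v.ν (l.coeff i * h ^ i) := by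
    intro i
    rcases eq_or_ne (l.coeff i) 0 with h0 | h0
    · rw [h0, zero_mul, v.nu0]
      exact le_top
    have h2 : qCoeff Q f i = l.coeff i := by
      rw [hlf]
      exact PolyVal.qCoeff_eval hQm hq0 l (fun j' => by rw [hQn]; exact hlc j') i
    have h3 := v.nuQ_le_coord hQm hq0 f i
    rw [h2, ← hrmQ] at h3
    have h4 : v.ν (l.coeff i * Q ^ i) = v.ν (l.coeff i * h ^ i) := by
      rw [v.ν_mul, v.ν_mul, v.nu_pow, v.nu_pow, hQco, hhco]
    rw [h4] at h3
    exact h3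
  have hC3 := v.eval_small_coords hQ'm hq0' hEsmQ' hEQ' l
    (fun j' => by rw [hQ'n]; exact hlc j') hh0 (by omega) hcval
  set W := eval h l with hWdef
  have hKT : ∀ t, 1 ≤ t → v.nuQ Q' f < v.ν (qCoeff Q' W t * Q' ^ t) := by
    intro t ht
    calc v.nuQ Q' f ≤ ((rmQ + (r' : ℝ) * (rQ' - rQ) : ℝ) : WithTop ℝ) := hC4'
      _ < ((rmQ + (v.eps Q' - E) : ℝ) : WithTop ℝ) := WithTop.coe_lt_coe.2 hstrict_num
      _ ≤ v.ν (qCoeff Q' W t * Q' ^ t) := by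
          have := (hC3 t).2 ht
          rw [← WithTop.coe_add] at this
          exact this
  have ha0W : qCoeff Q' W 0 = qCoeff Q' f 0 := by
    rw [hlf]
    exact (PolyVal.qCoeff_zero_eval hQ'm hq0' l Q).symm
  have ha0_ge : v.nuQ Q' f ≤ v.ν (qCoeff Q' f 0) := by
    have := v.nuQ_le_coord hQ'm hq0' f 0
    rwa [pow_zero, mul_one] at this
  have hgoal1 : v.nuQ Q' f ≤ v.nuQ Q' W := by
    refine v.le_nuQ _ fun t => ?_
    cases t with
    | zero =>
      rw [pow_zero, mul_one, ha0W]
      exact ha0_ge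
    | succ t => exact (hKT (t + 1) (by omega)).le
  have hnuf_lt_top : v.nuQ Q' f < ⊤ := by
    refine lt_of_le_of_lt (v.nuQ_le_nu hQ'm hq0' f) ?_
    rw [hrf]
    exact WithTop.coe_lt_top rf
  refine ⟨hgoal1, ?_, ?_⟩
  · -- forward
    intro heq
    have hi : v.ν (qCoeff Q' f 0) = v.nuQ Q' f := by
      by_contra hne
      have hgt : v.nuQ Q' f < v.ν (qCoeff Q' f 0) := lt_of_le_of_ne ha0_ge (Ne.symm hne)
      have hlt : v.nuQ Q' f < v.nuQ Q' W := by
        refine (Finset.lt_inf_iff hnuf_lt_top).2 fun t _ => ?_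
        cases t with
        | zero =>
          rw [pow_zero, mul_one, ha0W]
          exact hgt
        | succ t => exact hKT (t + 1) (by omega)
      rw [heq] at hlt
      exact lt_irrefl _ hlt
    refine ⟨hi, ?_⟩
    -- ν W = nuQ Q' f
    have hexpW := expansion hQ'm hq0' W (W.natDegree / Q'.natDegree)
      (PolyVal.div_deg_lt_succ_mul _ _ hq0')
    rw [Finset.sum_range_succ' (fun k => qCoeff Q' W k * Q' ^ k)] at hexpW
    have hrest : v.nuQ Q' f < v.ν (∑ i ∈ Finset.range (W.natDegree / Q'.natDegree),
        qCoeff Q' W (i + 1) * Q' ^ (i + 1)) := by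
      refine lt_of_lt_of_le ?_ (v.nu_sum_ge _ _)
      exact (Finset.lt_inf_iff hnuf_lt_top).2 fun i _ => hKT (i + 1) (by omega)
    have hν0 : v.ν (qCoeff Q' W 0 * Q' ^ 0) = v.nuQ Q' f := by
      rw [pow_zero, mul_one, ha0W, hi]
    have hWsum : W = qCoeff Q' W 0 * Q' ^ 0 + ∑ i ∈ Finset.range (W.natDegree / Q'.natDegree),
        qCoeff Q' W (i + 1) * Q' ^ (i + 1) := by
      rw [add_comm]
      exact hexpW
    have : v.ν W = v.ν (qCoeff Q' W 0 * Q' ^ 0) := by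
      conv_lhs => rw [hWsum]
      exact v.nu_add_eq_left (by rw [hν0]; exact hrest)
    rw [this, hν0]
  · -- backward
    rintro ⟨h1, _⟩
    refine le_antisymm ?_ hgoal1
    have h2 := v.nuQ_le_coord hQ'm hq0' W 0
    rw [pow_zero, mul_one, ha0W, h1] at h2
    exact h2
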